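/- arXiv:1510.01141 — 2 statements merged into one kernel-verified Lean document; each statement's English description precedes it below -/
import Mathlib

section
/- Let F be a totally real number field of degree n ≥ 2 with real embeddings ι₁,…,ι_n, let r ≥ 2, and let v = (v_1,…,v_r) ∈ F^r satisfy v_p ≠ 0 for all p and ι_i(v_q)ι_k(v_p) ≠ ι_i(v_p)ι_k(v_q) for all i ≠ k and p ≠ q. Then for every nonzero α ∈ F and every x = (x_1,…,x_r) ∈ ℝ^r, V(α^{−1}v, x) − V(v, x) = ( (1/n) Σ_{k=1}^n log|ι_k(α)| − log|ι₁(α)| ) · ( ζ_fml(0, (ι₁(v_q))_{q=1}^r, x) − (1/n) Σ_{k=1}^n ζ_fml(0, (ι_k(v_q))_{q=1}^r, x) ), where α^{−1}v = (α^{−1}v_1,…,α^{−1}v_r). In particular, when α is totally positive this equals ((1/n) log N(α) − log ι₁(α)) times the second factor, N(α) = Π_k ι_k(α) being the norm. -/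
open scoped BigOperators

/-- The formal multiple zeta value `zetaFml m a x = ζ_fml(1 - m, a, x)` of the paper:
`(-1)^r (m-1)! ∑_{l, Σ l i = m + r - 1} ∏_i B_{l i}(x i) * (a i)^(l i - 1) / (l i)!`,
where `B_l` is the `l`-th Bernoulli polynomial (normalized with `B₁(X) = X - 1/2`)
and `(a i)^(l i - 1)` is an integer (`zpow`) power.  In particular
`ζ_fml(0, a, x) = zetaFml 1 a x` and `ζ_fml(-1, a, x) = zetaFml 2 a x`. -/
noncomputable def zetaFml (m : ℕ) {r : ℕ} (a x : Fin r → ℝ) : ℝ :=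
  (-1 : ℝ) ^ r * (Nat.factorial (m - 1)) *
    ∑ l ∈ Finset.Nat.antidiagonalTuple r (m + r - 1),
      ∏ i, Polynomial.aeval (x i) (Polynomial.bernoulli (l i)) * a i ^ ((l i : ℤ) - 1)
        / (Nat.factorial (l i))

/-- The `V`-term of the paper, for a totally real field `F` of degree `n + 1` whose real
embeddings are enumerated by `emb : Fin (n+1) → (F →+* ℝ)` (with `ι₁ = emb 0`), a vector
`v : Fin (s+1) → F` of nonzero elements, and `x : Fin (s+1) → ℝ`:
`V(v,x) = -(1/n) ∑_{k ≠ 0} ∑_p ζ_fml(-1, (ι₁(v_q)/ι₁(v_p) - ι_k(v_q)/ι_k(v_p))_{q≠p}, (x_q)_{q≠p})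
  · log|ι₁(v_p)/ι_k(v_p)|
  + (1/n²) ∑_{i < k} ∑_p ζ_fml(-1, (ι_i(v_q)/ι_i(v_p) - ι_k(v_q)/ι_k(v_p))_{q≠p}, (x_q)_{q≠p})
  · log|ι_i(v_p)/ι_k(v_p)|`. -/
noncomputable def Vterm {F : Type*} [Field F] {n s : ℕ} (emb : Fin (n + 1) → (F →+* ℝ))
    (v : Fin (s + 1) → F) (x : Fin (s + 1) → ℝ) : ℝ :=
  -(1 / (n + 1 : ℝ)) *
      ∑ k ∈ Finset.univ.filter (fun k : Fin (n + 1) => k ≠ 0), ∑ p : Fin (s + 1),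
        zetaFml 2
          (fun q : Fin s =>
            emb 0 (v (p.succAbove q)) / emb 0 (v p) - emb k (v (p.succAbove q)) / emb k (v p))
          (fun q : Fin s => x (p.succAbove q))
        * Real.log |emb 0 (v p) / emb k (v p)|
    + (1 / (n + 1 : ℝ) ^ 2) *
      ∑ i : Fin (n + 1), ∑ k ∈ Finset.univ.filter (fun k : Fin (n + 1) => i < k),
        ∑ p : Fin (s + 1),
          zetaFml 2
            (fun q : Fin s =>
              emb i (v (p.succAbove q)) / emb i (v p) - emb k (v (p.succAbove q)) / emb k (v p))
            (fun q : Fin s => x (p.succAbove q))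
          * Real.log |emb i (v p) / emb k (v p)|

/-- The nondegeneracy (cross-ratio) condition
`ι_i(w_q)ι_k(w_p) ≠ ι_i(w_p)ι_k(w_q)` for all `i ≠ k` and `p ≠ q`. -/
def Nondeg {F : Type*} [Field F] {n s : ℕ} (emb : Fin n → (F →+* ℝ))
    (w : Fin s → F) : Prop :=
  ∀ i k : Fin n, i ≠ k → ∀ p q : Fin s, p ≠ q →
    emb i (w q) * emb k (w p) ≠ emb i (w p) * emb k (w q)

section AuxiliaryLemmas

open Polynomial Finset

lemma aux_prod_div_mul (k : ℕ) (u d w : Fin k → ℝ) (l : Fin k → ℕ) :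
    (∏ q, u q / d q) * ∏ q, w q ^ (l q) = ∏ q, u q * w q ^ (l q) / d q := by
  rw [← Finset.prod_mul_distrib]
  exact Finset.prod_congr rfl fun q _ => by ring

lemma aux_prod_zpow_mul (k : ℕ) (u d w : Fin k → ℝ) (hw : ∀ q, w q ≠ 0) (l : Fin k → ℕ) :
    (∏ q, u q * w q ^ ((l q : ℤ) - 1) / d q) * ∏ q, w q
      = ∏ q, u q * w q ^ (l q) / d q := by
  rw [← Finset.prod_mul_distrib]
  refine Finset.prod_congr rfl fun q _ => ?_
  rw [zpow_sub_one₀ (hw q), zpow_natCast]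
  have : u q * (w q ^ l q * (w q)⁻¹) / d q * w q
      = u q * w q ^ l q / d q * ((w q)⁻¹ * w q) := by ring
  rw [this, inv_mul_cancel₀ (hw q), mul_one]

lemma aux_prod_zpow_neg (t : ℝ) (ht : t ≠ 0) (s : ℕ) (l : Fin s → ℕ)
    (hl : ∑ q, l q = s + 1) : ∏ q, t ^ ((l q : ℤ) - 1) = t := by
  have h1 : ∀ q : Fin s, t ^ ((l q : ℤ) - 1) = t ^ (l q) * t⁻¹ := fun q => by
    rw [zpow_sub_one₀ ht, zpow_natCast]
  simp only [h1]
  rw [Finset.prod_mul_distrib, Finset.prod_const, Finset.prod_pow_eq_pow_sum, hl,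
    Finset.card_univ, Fintype.card_fin, pow_succ]
  field_simp
  rw [← mul_pow, mul_one_div_cancel ht, one_pow]

lemma key_identity (s : ℕ) (a b x : Fin (s + 1) → ℝ)
    (ha : ∀ p, a p ≠ 0) (hb : ∀ p, b p ≠ 0)
    (hcr : ∀ p q : Fin (s + 1), p ≠ q → a q * b p ≠ a p * b q) :
    ∑ p : Fin (s + 1),
      zetaFml 2 (fun q : Fin s => a (p.succAbove q) / a p - b (p.succAbove q) / b p)
        (fun q : Fin s => x (p.succAbove q))
      = zetaFml 1 b x - zetaFml 1 a x := by
  classical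
  let z : Fin (s + 1) → ℝ := fun p => -(b p) / a p
  let lin : Fin (s + 1) → ℝ[X] := fun i => C (a i) * X + C (b i)
  let c : (p : Fin (s + 1)) → Fin s → ℝ :=
    fun p q => a (p.succAbove q) / a p - b (p.succAbove q) / b p
  let bl : ℕ → ℝ → ℝ := fun l y => (Polynomial.aeval y (Polynomial.bernoulli l) : ℝ)
  let T : Fin (s + 1) → ℝ := fun p => ∑ l ∈ Finset.Nat.antidiagonalTuple s (s + 1),
      ∏ q, bl (l q) (x (p.succAbove q)) * (c p q) ^ ((l q : ℤ) - 1) / (Nat.factorial (l q))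
  let R : Fin (s + 1) → ℝ := fun p => ∑ l ∈ Finset.Nat.antidiagonalTuple s (s + 1),
      ∏ q, bl (l q) (x (p.succAbove q))
          * (a (p.succAbove q) * z p + b (p.succAbove q)) ^ ((l q : ℤ) - 1)
        / (Nat.factorial (l q))
  let A : ℝ := ∑ l ∈ Finset.Nat.antidiagonalTuple (s + 1) (s + 1),
      ∏ i, bl (l i) (x i) * a i ^ ((l i : ℤ) - 1) / (Nat.factorial (l i))
  let Bv : ℝ := ∑ l ∈ Finset.Nat.antidiagonalTuple (s + 1) (s + 1),
      ∏ i, bl (l i) (x i) * b i ^ ((l i : ℤ) - 1) / (Nat.factorial (l i))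
  let Φ : ℝ[X] := ∑ l ∈ Finset.Nat.antidiagonalTuple (s + 1) (s + 1),
      C (∏ i, bl (l i) (x i) / (Nat.factorial (l i))) * ∏ i, lin i ^ (l i)
  let Ψ : ℝ[X] := C A * ∏ i, lin i
      + ∑ p : Fin (s + 1), C (R p) * ∏ q : Fin s, lin (p.succAbove q)
  -- elementary facts
  have hzp : ∀ p, a p * z p + b p = 0 := by
    intro p
    show a p * (-(b p) / a p) + b p = 0
    field_simp
    rw [div_self (ha p)]; ring
  have hwne : ∀ (p : Fin (s + 1)) (q : Fin s), a (p.succAbove q) * z p + b (p.succAbove q) ≠ 0 := by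
    intro p q h
    apply hcr p (p.succAbove q) (Fin.succAbove_ne p q).symm
    replace h : a (p.succAbove q) * (-(b p) / a p) + b (p.succAbove q) = 0 := h
    field_simp [ha p] at h
    linear_combination -h
  have hzinj : Function.Injective z := by
    intro p q h
    by_contra hpq
    apply hcr p q hpq
    replace h : -(b p) / a p = -(b q) / a q := h
    simp only [div_eq_div_iff (ha p) (ha q)] at h
    linear_combination -h
  have hlin_ne : ∀ i, lin i ≠ 0 := by
    intro i h
    have h2 := Polynomial.natDegree_linear (ha i) (b := b i)
    rw [show C (a i) * X + C (b i) = lin i from rfl, h] at h2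
    simp at h2
  have hlin_eval : ∀ (y : ℝ) (i), (lin i).eval y = a i * y + b i := by
    intro y i; simp [lin]
  have hlin_deg : ∀ i, (lin i).natDegree = 1 := fun i => Polynomial.natDegree_linear (ha i)
  have hlin_lead : ∀ i, (lin i).leadingCoeff = a i := fun i => Polynomial.leadingCoeff_linear (ha i)
  -- degrees
  have hdegN : ∀ l ∈ Finset.Nat.antidiagonalTuple (s + 1) (s + 1), (∏ i, lin i ^ l i).natDegree = (s + 1) := by
    intro l hl
    rw [Polynomial.natDegree_prod _ _ (fun i _ => pow_ne_zero _ (hlin_ne i))]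
    simp only [Polynomial.natDegree_pow, hlin_deg, mul_one]
    exact Finset.Nat.mem_antidiagonalTuple.mp hl
  have hleadN : ∀ l : Fin (s + 1) → ℕ, (∏ i, lin i ^ l i).leadingCoeff = ∏ i, a i ^ l i := by
    intro l
    rw [Polynomial.leadingCoeff_prod]
    exact Finset.prod_congr rfl fun i _ => by rw [Polynomial.leadingCoeff_pow, hlin_lead]
  have hdegP : (∏ i, lin i).natDegree = (s + 1) := by
    rw [Polynomial.natDegree_prod _ _ (fun i _ => hlin_ne i)]
    simp [hlin_deg]
  have hdegS : ∀ p : Fin (s + 1), (∏ q : Fin s, lin (p.succAbove q)).natDegree = s := by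
    intro p
    rw [Polynomial.natDegree_prod _ _ (fun i _ => hlin_ne _)]
    simp [hlin_deg]
  -- coefficients
  have hcoeff : ∀ m : ℕ, (s + 1) ≤ m → (Φ - Ψ).coeff m = 0 := by
    intro m hm
    rw [Polynomial.coeff_sub]
    have hΦ : Φ.coeff m = ∑ l ∈ Finset.Nat.antidiagonalTuple (s + 1) (s + 1),
        (∏ i, bl (l i) (x i) / (Nat.factorial (l i))) * (∏ i, lin i ^ l i).coeff m := by
      simp [Φ, Polynomial.finset_sum_coeff, Polynomial.coeff_C_mul]
    have hΨ : Ψ.coeff m = A * (∏ i, lin i).coeff m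
        + ∑ p : Fin (s + 1), R p * (∏ q : Fin s, lin (p.succAbove q)).coeff m := by
      simp [Ψ, Polynomial.finset_sum_coeff, Polynomial.coeff_C_mul]
    have hSm : ∀ p : Fin (s + 1), (∏ q : Fin s, lin (p.succAbove q)).coeff m = 0 := by
      intro p
      apply Polynomial.coeff_eq_zero_of_natDegree_lt
      rw [hdegS p]; omega
    rcases eq_or_lt_of_le hm with hm' | hm'
    · -- m = (s + 1)
      subst hm'
      rw [hΦ, hΨ]
      simp only [hSm, mul_zero, Finset.sum_const_zero, add_zero]
      have h1 : ∀ l ∈ Finset.Nat.antidiagonalTuple (s + 1) (s + 1),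
          (∏ i, lin i ^ l i).coeff (s + 1) = ∏ i, a i ^ l i := by
        intro l hl
        have hc := Polynomial.coeff_natDegree (p := ∏ i, lin i ^ l i)
        rw [hdegN l hl, hleadN] at hc
        exact hc
      have h2 : (∏ i, lin i).coeff (s + 1) = ∏ i, a i := by
        have hc := Polynomial.coeff_natDegree (p := ∏ i, lin i)
        rw [hdegP, Polynomial.leadingCoeff_prod] at hc
        rw [hc]
        exact Finset.prod_congr rfl fun i _ => hlin_lead i
      rw [Finset.sum_congr rfl fun l hl => by rw [h1 l hl], h2]
      have h3 : ∑ l ∈ Finset.Nat.antidiagonalTuple (s + 1) (s + 1),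
          (∏ i, bl (l i) (x i) / (Nat.factorial (l i))) * ∏ i, a i ^ l i
          = ∑ l ∈ Finset.Nat.antidiagonalTuple (s + 1) (s + 1),
            ∏ i, bl (l i) (x i) * a i ^ (l i) / (Nat.factorial (l i)) :=
        Finset.sum_congr rfl fun l _ => aux_prod_div_mul (s + 1) _ _ _ l
      have h4 : A * ∏ i, a i = ∑ l ∈ Finset.Nat.antidiagonalTuple (s + 1) (s + 1),
          ∏ i, bl (l i) (x i) * a i ^ (l i) / (Nat.factorial (l i)) := by
        rw [show A = ∑ l ∈ Finset.Nat.antidiagonalTuple (s + 1) (s + 1),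
          ∏ i, bl (l i) (x i) * a i ^ ((l i : ℤ) - 1) / (Nat.factorial (l i)) from rfl,
          Finset.sum_mul]
        exact Finset.sum_congr rfl fun l _ => aux_prod_zpow_mul (s + 1) _ _ _ ha l
      rw [h3, h4, sub_self]
    · -- (s + 1) < m
      have hz1 : Φ.coeff m = 0 := by
        rw [hΦ]
        refine Finset.sum_eq_zero fun l hl => ?_
        rw [Polynomial.coeff_eq_zero_of_natDegree_lt (by rw [hdegN l hl]; omega), mul_zero]
      have hz2 : Ψ.coeff m = 0 := by
        rw [hΨ]
        rw [Polynomial.coeff_eq_zero_of_natDegree_lt (by rw [hdegP]; omega)]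
        simp [hSm]
      rw [hz1, hz2, sub_self]
  -- evaluations
  have hΦeval : ∀ y : ℝ, Φ.eval y = ∑ l ∈ Finset.Nat.antidiagonalTuple (s + 1) (s + 1),
      (∏ i, bl (l i) (x i) / (Nat.factorial (l i))) * ∏ i, (a i * y + b i) ^ (l i) := by
    intro y
    simp [Φ, Polynomial.eval_finset_sum, Polynomial.eval_prod, hlin_eval]
  have hΨeval : ∀ y : ℝ, Ψ.eval y = A * ∏ i, (a i * y + b i)
      + ∑ p : Fin (s + 1), R p * ∏ q : Fin s, (a (p.succAbove q) * y + b (p.succAbove q)) := by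
    intro y
    simp [Ψ, Polynomial.eval_finset_sum, Polynomial.eval_prod, hlin_eval]
  have hRprod : ∀ p : Fin (s + 1),
      R p * ∏ q : Fin s, (a (p.succAbove q) * z p + b (p.succAbove q))
        = ∑ l ∈ Finset.Nat.antidiagonalTuple s (s + 1),
          ∏ q, bl (l q) (x (p.succAbove q))
            * (a (p.succAbove q) * z p + b (p.succAbove q)) ^ (l q)
            / (Nat.factorial (l q)) := by
    intro p
    rw [show R p = ∑ l ∈ Finset.Nat.antidiagonalTuple s (s + 1),
      ∏ q, bl (l q) (x (p.succAbove q))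
          * (a (p.succAbove q) * z p + b (p.succAbove q)) ^ ((l q : ℤ) - 1)
        / (Nat.factorial (l q)) from rfl, Finset.sum_mul]
    exact Finset.sum_congr rfl fun l _ => aux_prod_zpow_mul s _ _ _ (hwne p) l
  have hΦz : ∀ p, Φ.eval (z p)
      = R p * ∏ q : Fin s, (a (p.succAbove q) * z p + b (p.succAbove q)) := by
    intro p
    rw [hΦeval, hRprod]
    rw [← Finset.sum_filter_add_sum_filter_not (Finset.Nat.antidiagonalTuple (s + 1) (s + 1))
      (fun l => l p = 0)]
    have h2 : ∑ l ∈ (Finset.Nat.antidiagonalTuple (s + 1) (s + 1)).filter (fun l => ¬ l p = 0),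
        (∏ i, bl (l i) (x i) / (Nat.factorial (l i))) * ∏ i, (a i * z p + b i) ^ (l i) = 0 := by
      refine Finset.sum_eq_zero fun l hl => ?_
      have h3 : ∏ i, (a i * z p + b i) ^ (l i) = 0 := by
        refine Finset.prod_eq_zero (Finset.mem_univ p) ?_
        rw [hzp p]; exact zero_pow (Finset.mem_filter.mp hl).2
      rw [h3, mul_zero]
    rw [h2, add_zero]
    apply Finset.sum_nbij' (i := fun l => fun q => l (p.succAbove q))
      (j := fun l => p.insertNth 0 l)
    · intro l hl
      rw [Finset.mem_filter, Finset.Nat.mem_antidiagonalTuple] at hl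
      rw [Finset.Nat.mem_antidiagonalTuple]
      have := Fin.sum_univ_succAbove l p
      omega
    · intro l hl
      rw [Finset.Nat.mem_antidiagonalTuple] at hl
      rw [Finset.mem_filter, Finset.Nat.mem_antidiagonalTuple]
      have h1 := Fin.sum_univ_succAbove (p.insertNth (α := fun _ => ℕ) 0 l) p
      simp only [Fin.insertNth_apply_same, Fin.insertNth_apply_succAbove] at h1
      refine ⟨?_, Fin.insertNth_apply_same (α := fun _ => ℕ) p 0 l⟩
      simp only [h1]
      omega
    · intro l hl
      have h0 : l p = 0 := (Finset.mem_filter.mp hl).2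
      have := Fin.insertNth_self_removeNth (α := fun _ => ℕ) p l
      rw [h0] at this
      exact this
    · intro l _
      funext q
      exact Fin.insertNth_apply_succAbove (α := fun _ => ℕ) p 0 l q
    · intro l hl
      have h0 : l p = 0 := (Finset.mem_filter.mp hl).2
      rw [Fin.prod_univ_succAbove (fun i => bl (l i) (x i) / (Nat.factorial (l i))) p,
        Fin.prod_univ_succAbove (fun i => (a i * z p + b i) ^ (l i)) p, h0]
      have hbl0 : bl 0 (x p) / (Nat.factorial 0 : ℝ) = 1 := by
        simp [bl, Polynomial.bernoulli_zero]
      rw [hbl0, pow_zero, one_mul, one_mul]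
      exact aux_prod_div_mul s _ _ _ _
  have hΨz : ∀ p, Ψ.eval (z p)
      = R p * ∏ q : Fin s, (a (p.succAbove q) * z p + b (p.succAbove q)) := by
    intro p
    rw [hΨeval]
    rw [Finset.prod_eq_zero (Finset.mem_univ p) (hzp p), mul_zero, zero_add]
    refine Finset.sum_eq_single p (fun p' _ hp' => ?_) (fun h => absurd (Finset.mem_univ p) h)
    obtain ⟨q, hq⟩ := Fin.exists_succAbove_eq (show p ≠ p' from fun h => hp' h.symm)
    have : a (p'.succAbove q) * z p + b (p'.succAbove q) = 0 := by rw [hq]; exact hzp p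
    rw [Finset.prod_eq_zero (Finset.mem_univ q) this, mul_zero]
  have hroot : ∀ p, (Φ - Ψ).eval (z p) = 0 := by
    intro p
    rw [Polynomial.eval_sub, hΦz p, hΨz p, sub_self]
  have hΦΨ : Φ = Ψ := by
    have h0 : Φ - Ψ = 0 := by
      by_cases hD : Φ - Ψ = 0
      · exact hD
      · refine Polynomial.eq_zero_of_natDegree_lt_card_of_eval_eq_zero (Φ - Ψ) hzinj hroot ?_
        rw [Fintype.card_fin]
        have hdeg : (Φ - Ψ).degree < ((s + 1) : ℕ) :=
          (Polynomial.degree_lt_iff_coeff_zero _ _).mpr (fun m hm => hcoeff m hm)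
        exact (Polynomial.natDegree_lt_iff_degree_lt hD).mpr hdeg
    exact sub_eq_zero.mp h0
  -- evaluate at 0
  have hΦ0 : Φ.eval 0 = Bv * ∏ i, b i := by
    rw [hΦeval]
    simp only [mul_zero, zero_add]
    rw [show Bv = ∑ l ∈ Finset.Nat.antidiagonalTuple (s + 1) (s + 1),
      ∏ i, bl (l i) (x i) * b i ^ ((l i : ℤ) - 1) / (Nat.factorial (l i)) from rfl,
      Finset.sum_mul]
    refine Finset.sum_congr rfl fun l _ => ?_
    rw [aux_prod_zpow_mul (s + 1) _ _ _ hb l, aux_prod_div_mul (s + 1) _ _ _ l]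
  have hΨ0 : Ψ.eval 0 = A * ∏ i, b i - (∑ p, T p) * ∏ i, b i := by
    rw [hΨeval]
    simp only [mul_zero, zero_add]
    congr 1
    have hR : ∀ p, R p = -(b p) * T p := by
      intro p
      have hwc : ∀ q : Fin s, a (p.succAbove q) * z p + b (p.succAbove q)
          = -(b p) * c p q := by
        intro q
        show a (p.succAbove q) * (-(b p) / a p) + b (p.succAbove q)
          = -(b p) * (a (p.succAbove q) / a p - b (p.succAbove q) / b p)
        have e1 : -(b p) * (a (p.succAbove q) / a p - b (p.succAbove q) / b p)
            = a (p.succAbove q) * (-(b p) / a p) + (b p / b p) * b (p.succAbove q) := by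
          ring
        rw [e1, div_self (hb p), one_mul]
      rw [show R p = ∑ l ∈ Finset.Nat.antidiagonalTuple s (s + 1),
        ∏ q, bl (l q) (x (p.succAbove q))
            * (a (p.succAbove q) * z p + b (p.succAbove q)) ^ ((l q : ℤ) - 1)
          / (Nat.factorial (l q)) from rfl,
        show T p = ∑ l ∈ Finset.Nat.antidiagonalTuple s (s + 1),
        ∏ q, bl (l q) (x (p.succAbove q)) * (c p q) ^ ((l q : ℤ) - 1)
          / (Nat.factorial (l q)) from rfl, Finset.mul_sum]
      refine Finset.sum_congr rfl fun l hl => ?_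
      have hterm : ∀ q : Fin s, bl (l q) (x (p.succAbove q))
            * (a (p.succAbove q) * z p + b (p.succAbove q)) ^ ((l q : ℤ) - 1)
          / (Nat.factorial (l q))
          = (bl (l q) (x (p.succAbove q)) * (c p q) ^ ((l q : ℤ) - 1)
            / (Nat.factorial (l q))) * (-(b p)) ^ ((l q : ℤ) - 1) := by
        intro q
        rw [hwc q, mul_zpow]
        ring
      simp only [hterm]
      rw [Finset.prod_mul_distrib,
        aux_prod_zpow_neg (-(b p)) (neg_ne_zero.mpr (hb p)) s l
          (Finset.Nat.mem_antidiagonalTuple.mp hl)]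
      ring
    have hbp : ∀ p : Fin (s + 1), ∏ q : Fin s, b (p.succAbove q) = (∏ i, b i) / b p := by
      intro p
      rw [eq_div_iff (hb p), mul_comm]
      exact (Fin.prod_univ_succAbove b p).symm
    have hpt : ∀ p : Fin (s + 1), R p * ∏ q : Fin s, b (p.succAbove q)
        = -(T p * ∏ i, b i) := by
      intro p
      rw [hbp p, hR p]
      calc -(b p) * T p * ((∏ i, b i) / b p)
          = -(T p * ∏ i, b i) * (b p / b p) := by ring
        _ = -(T p * ∏ i, b i) := by rw [div_self (hb p), mul_one]
    calc ∑ p, R p * ∏ q : Fin s, b (p.succAbove q)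
        = ∑ p, -(T p * ∏ i, b i) := Finset.sum_congr rfl fun p _ => hpt p
      _ = -(∑ p, T p * ∏ i, b i) := by rw [Finset.sum_neg_distrib]
      _ = -((∑ p, T p) * ∏ i, b i) := by rw [Finset.sum_mul]
  have hev0 : Bv * ∏ i, b i = A * ∏ i, b i - (∑ p, T p) * ∏ i, b i := by
    rw [← hΦ0, ← hΨ0, hΦΨ]
  have hprodb : (∏ i, b i) ≠ 0 := Finset.prod_ne_zero_iff.mpr fun i _ => hb i
  have hTsum : ∑ p, T p = A - Bv := by
    have h6 : (A - Bv - ∑ p, T p) * ∏ i, b i = 0 := by linear_combination -hev0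
    rcases mul_eq_zero.mp h6 with h | h
    · linarith
    · exact absurd h hprodb
  have hfin : ∀ p : Fin (s + 1),
      zetaFml 2 (fun q : Fin s => a (p.succAbove q) / a p - b (p.succAbove q) / b p)
        (fun q : Fin s => x (p.succAbove q)) = (-1 : ℝ) ^ s * T p := by
    intro p
    simp only [zetaFml]
    have h7 : 2 + s - 1 = s + 1 := by omega
    rw [h7, show ((Nat.factorial (2 - 1) : ℕ) : ℝ) = 1 by norm_num [Nat.factorial], mul_one]
  have hzb : zetaFml 1 b x = (-1 : ℝ) ^ (s + 1) * Bv := by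
    simp only [zetaFml]
    have h8 : 1 + (s + 1) - 1 = s + 1 := by omega
    rw [h8, show ((Nat.factorial (1 - 1) : ℕ) : ℝ) = 1 by norm_num [Nat.factorial], mul_one]
  have hza : zetaFml 1 a x = (-1 : ℝ) ^ (s + 1) * A := by
    simp only [zetaFml]
    have h8 : 1 + (s + 1) - 1 = s + 1 := by omega
    rw [h8, show ((Nat.factorial (1 - 1) : ℕ) : ℝ) = 1 by norm_num [Nat.factorial], mul_one]
  rw [hzb, hza, Finset.sum_congr rfl (fun p _ => hfin p), ← Finset.mul_sum, hTsum, pow_succ]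
  ring

lemma alg_lemma (m : ℕ) (ζ L : Fin (m + 1) → ℝ) :
    -(1 / (m + 1 : ℝ)) * ∑ k ∈ Finset.univ.filter (fun k : Fin (m + 1) => k ≠ 0),
        (ζ k - ζ 0) * (L k - L 0)
      + (1 / (m + 1 : ℝ) ^ 2) * ∑ i : Fin (m + 1),
          ∑ k ∈ Finset.univ.filter (fun k : Fin (m + 1) => i < k), (ζ k - ζ i) * (L k - L i)
    = ((1 / (m + 1 : ℝ)) * ∑ k, L k - L 0) * (ζ 0 - (1 / (m + 1 : ℝ)) * ∑ k, ζ k) := by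
  have expand : ∀ i : Fin (m + 1), ∑ k, (ζ k - ζ i) * (L k - L i)
      = ∑ k, ζ k * L k - ζ i * ∑ k, L k - (∑ k, ζ k) * L i + (m + 1 : ℝ) * (ζ i * L i) := by
    intro i
    have h1 : ∀ k : Fin (m + 1), (ζ k - ζ i) * (L k - L i)
        = ζ k * L k - ζ i * L k - ζ k * L i + ζ i * L i := fun k => by ring
    rw [Finset.sum_congr rfl fun k _ => h1 k]
    rw [Finset.sum_add_distrib, Finset.sum_sub_distrib, Finset.sum_sub_distrib,
      ← Finset.mul_sum, ← Finset.sum_mul, Finset.sum_const, Finset.card_univ,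
      Fintype.card_fin, nsmul_eq_mul]
    push_cast
    ring
  have e0 : ∑ k ∈ Finset.univ.filter (fun k : Fin (m + 1) => k ≠ 0),
      (ζ k - ζ 0) * (L k - L 0) = ∑ k, (ζ k - ζ 0) * (L k - L 0) := by
    rw [← Finset.sum_filter_add_sum_filter_not Finset.univ (fun k : Fin (m + 1) => k ≠ 0)
      (fun k => (ζ k - ζ 0) * (L k - L 0))]
    have h2 : Finset.univ.filter (fun k : Fin (m + 1) => ¬ k ≠ 0) = {0} := by
      ext k; simp
    rw [h2, Finset.sum_singleton]
    simp
  -- the strictly-triangular double sum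
  have hflip : ∑ i : Fin (m + 1), ∑ k ∈ Finset.univ.filter (fun k : Fin (m + 1) => k < i),
      (ζ k - ζ i) * (L k - L i)
      = ∑ i : Fin (m + 1), ∑ k ∈ Finset.univ.filter (fun k : Fin (m + 1) => i < k),
        (ζ k - ζ i) * (L k - L i) := by
    have hcomm := Finset.sum_comm' (s := (Finset.univ : Finset (Fin (m + 1))))
      (t := fun i => Finset.univ.filter (fun k : Fin (m + 1) => k < i))
      (t' := (Finset.univ : Finset (Fin (m + 1))))
      (s' := fun k => Finset.univ.filter (fun i : Fin (m + 1) => k < i))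
      (f := fun i k => (ζ k - ζ i) * (L k - L i)) (by simp)
    rw [hcomm]
    exact Finset.sum_congr rfl fun i _ => Finset.sum_congr rfl fun k _ => by ring
  have hsplit : ∑ i : Fin (m + 1), ∑ k, (ζ k - ζ i) * (L k - L i)
      = 2 * ∑ i : Fin (m + 1), ∑ k ∈ Finset.univ.filter (fun k : Fin (m + 1) => i < k),
        (ζ k - ζ i) * (L k - L i) := by
    have h3 : ∀ i : Fin (m + 1), ∑ k, (ζ k - ζ i) * (L k - L i)
        = ∑ k ∈ Finset.univ.filter (fun k : Fin (m + 1) => i < k), (ζ k - ζ i) * (L k - L i)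
          + ∑ k ∈ Finset.univ.filter (fun k : Fin (m + 1) => k < i),
            (ζ k - ζ i) * (L k - L i) := by
      intro i
      rw [← Finset.sum_filter_add_sum_filter_not Finset.univ (fun k : Fin (m + 1) => i < k)
        (fun k => (ζ k - ζ i) * (L k - L i))]
      congr 1
      have h4 : Finset.univ.filter (fun k : Fin (m + 1) => ¬ i < k)
          = insert i (Finset.univ.filter (fun k : Fin (m + 1) => k < i)) := by
        ext k
        simp only [Finset.mem_filter, Finset.mem_univ, true_and, Finset.mem_insert, not_lt]
        constructor
        · intro h; rcases eq_or_lt_of_le h with h' | h'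
          · exact Or.inl h'
          · exact Or.inr h'
        · rintro (rfl | h); · exact le_refl _
          · exact le_of_lt h
      rw [h4, Finset.sum_insert (by simp)]
      simp
    rw [Finset.sum_congr rfl fun i _ => h3 i, Finset.sum_add_distrib, hflip]
    ring
  -- turn everything into scalar algebra
  rw [e0, expand 0]
  have htot : ∑ i : Fin (m + 1), ∑ k ∈ Finset.univ.filter (fun k : Fin (m + 1) => i < k),
      (ζ k - ζ i) * (L k - L i)
      = (m + 1 : ℝ) * (∑ k, ζ k * L k) - (∑ k, ζ k) * (∑ k, L k) := by
    have h5 := hsplit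
    rw [Finset.sum_congr rfl fun i _ => expand i] at h5
    rw [Finset.sum_add_distrib, Finset.sum_sub_distrib, Finset.sum_sub_distrib,
      Finset.sum_const, Finset.card_univ, Fintype.card_fin, nsmul_eq_mul,
      ← Finset.sum_mul, ← Finset.mul_sum, ← Finset.mul_sum] at h5
    push_cast at h5
    nlinarith [h5]
  rw [htot]
  have hM : (m + 1 : ℝ) ≠ 0 := by positivity
  field_simp
  ring

end AuxiliaryLemmas

/-- behaviour of the `V`-term under scaling of the basis vector by `α⁻¹`.
The totally real field `F` of degree `n + 2 ≥ 2` has all its real embeddings enumerated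
bijectively by `emb`, with `ι₁ = emb 0`. -/
theorem Vterm_scaling {F : Type*} [Field F] [NumberField F] (n : ℕ)
    (hdeg : Module.finrank ℚ F = n + 2)
    (emb : Fin (n + 2) → (F →+* ℝ)) (hemb : Function.Bijective emb)
    (r : ℕ) (v : Fin (r + 2) → F) (hv : ∀ p, v p ≠ 0)
    (hnd : Nondeg emb v)
    (α : F) (hα : α ≠ 0) (x : Fin (r + 2) → ℝ) :
    (Vterm emb (fun p => α⁻¹ * v p) x - Vterm emb v x
      = ((1 / (n + 2 : ℝ)) * ∑ k : Fin (n + 2), Real.log |emb k α| - Real.log |emb 0 α|)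
        * (zetaFml 1 (fun q => emb 0 (v q)) x
            - (1 / (n + 2 : ℝ)) * ∑ k : Fin (n + 2), zetaFml 1 (fun q => emb k (v q)) x))
    ∧ ((∀ k, 0 < emb k α) →
      Vterm emb (fun p => α⁻¹ * v p) x - Vterm emb v x
        = ((1 / (n + 2 : ℝ)) * Real.log (∏ k : Fin (n + 2), emb k α) - Real.log (emb 0 α))
          * (zetaFml 1 (fun q => emb 0 (v q)) x
              - (1 / (n + 2 : ℝ)) * ∑ k : Fin (n + 2), zetaFml 1 (fun q => emb k (v q)) x)) := by
  classical
  have hne : ∀ (i : Fin (n + 2)) (y : F), y ≠ 0 → emb i y ≠ 0 := by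
    intro i y hy h
    exact hy ((emb i).injective (by rw [h, map_zero]))
  have hαne : ∀ i, emb i α ≠ 0 := fun i => hne i α hα
  have hvne : ∀ i p, emb i (v p) ≠ 0 := fun i p => hne i (v p) (hv p)
  set ζ : Fin (n + 2) → ℝ := fun k => zetaFml 1 (fun q => emb k (v q)) x with hζ
  set L : Fin (n + 2) → ℝ := fun k => Real.log |emb k α| with hL
  -- the key sum
  have hS : ∀ i k : Fin (n + 2), i ≠ k →
      (∑ p : Fin (r + 2), zetaFml 2
        (fun q : Fin (r + 1) =>
          emb i (v (p.succAbove q)) / emb i (v p) - emb k (v (p.succAbove q)) / emb k (v p))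
        (fun q : Fin (r + 1) => x (p.succAbove q))) = ζ k - ζ i := by
    intro i k hik
    exact key_identity (r + 1) (fun q => emb i (v q)) (fun q => emb k (v q)) x
      (fun p => hvne i p) (fun p => hvne k p) (fun p q hpq => hnd i k hik p q hpq)
  -- invariance of the zeta arguments
  have hArg : ∀ (i : Fin (n + 2)) (p : Fin (r + 2)) (q : Fin (r + 1)),
      emb i (α⁻¹ * v (p.succAbove q)) / emb i (α⁻¹ * v p)
        = emb i (v (p.succAbove q)) / emb i (v p) := by
    intro i p q
    rw [map_mul, map_mul, mul_div_mul_left _ _ (by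
      rw [map_inv₀]; exact inv_ne_zero (hαne i))]
  have hZeq : ∀ (i k : Fin (n + 2)) (p : Fin (r + 2)),
      zetaFml 2 (fun q : Fin (r + 1) =>
          emb i (α⁻¹ * v (p.succAbove q)) / emb i (α⁻¹ * v p)
            - emb k (α⁻¹ * v (p.succAbove q)) / emb k (α⁻¹ * v p))
        (fun q : Fin (r + 1) => x (p.succAbove q))
      = zetaFml 2 (fun q : Fin (r + 1) =>
          emb i (v (p.succAbove q)) / emb i (v p) - emb k (v (p.succAbove q)) / emb k (v p))
        (fun q : Fin (r + 1) => x (p.succAbove q)) := by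
    intro i k p
    congr 1
    funext q
    rw [hArg i p q, hArg k p q]
  -- log transformation
  have hLog : ∀ (i k : Fin (n + 2)) (p : Fin (r + 2)),
      Real.log |emb i (α⁻¹ * v p) / emb k (α⁻¹ * v p)|
        = Real.log |emb i (v p) / emb k (v p)| + (L k - L i) := by
    intro i k p
    have h1 : emb i (α⁻¹ * v p) / emb k (α⁻¹ * v p)
        = (emb i (v p) / emb k (v p)) * (emb k α / emb i α) := by
      rw [map_mul, map_mul, map_inv₀, map_inv₀]
      field_simp
    have h2 : emb i (v p) / emb k (v p) ≠ 0 := div_ne_zero (hvne i p) (hvne k p)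
    have h3 : emb k α / emb i α ≠ 0 := div_ne_zero (hαne k) (hαne i)
    rw [h1, abs_mul, Real.log_mul (abs_ne_zero.mpr h2) (abs_ne_zero.mpr h3)]
    congr 1
    rw [abs_div, Real.log_div (abs_ne_zero.mpr (hαne k)) (abs_ne_zero.mpr (hαne i))]
  -- the difference identity
  have hmain : Vterm emb (fun p => α⁻¹ * v p) x - Vterm emb v x
      = ((1 / (n + 2 : ℝ)) * ∑ k : Fin (n + 2), L k - L 0)
        * (ζ 0 - (1 / (n + 2 : ℝ)) * ∑ k : Fin (n + 2), ζ k) := by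
    have hsum1 :
        ∑ k ∈ Finset.univ.filter (fun k : Fin (n + 2) => k ≠ 0), ∑ p : Fin (r + 2),
          zetaFml 2 (fun q : Fin (r + 1) =>
              emb 0 (α⁻¹ * v (p.succAbove q)) / emb 0 (α⁻¹ * v p)
                - emb k (α⁻¹ * v (p.succAbove q)) / emb k (α⁻¹ * v p))
            (fun q : Fin (r + 1) => x (p.succAbove q))
          * Real.log |emb 0 (α⁻¹ * v p) / emb k (α⁻¹ * v p)|
        = (∑ k ∈ Finset.univ.filter (fun k : Fin (n + 2) => k ≠ 0), ∑ p : Fin (r + 2),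
            zetaFml 2 (fun q : Fin (r + 1) =>
                emb 0 (v (p.succAbove q)) / emb 0 (v p)
                  - emb k (v (p.succAbove q)) / emb k (v p))
              (fun q : Fin (r + 1) => x (p.succAbove q))
            * Real.log |emb 0 (v p) / emb k (v p)|)
          + ∑ k ∈ Finset.univ.filter (fun k : Fin (n + 2) => k ≠ 0),
              (ζ k - ζ 0) * (L k - L 0) := by
      rw [← Finset.sum_add_distrib]
      refine Finset.sum_congr rfl fun k hk => ?_
      have hk0 : (0 : Fin (n + 2)) ≠ k := Ne.symm (Finset.mem_filter.mp hk).2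
      calc ∑ p : Fin (r + 2), _ * _
          = ∑ p : Fin (r + 2),
            (zetaFml 2 (fun q : Fin (r + 1) =>
                emb 0 (v (p.succAbove q)) / emb 0 (v p)
                  - emb k (v (p.succAbove q)) / emb k (v p))
              (fun q : Fin (r + 1) => x (p.succAbove q))
            * Real.log |emb 0 (v p) / emb k (v p)|
            + zetaFml 2 (fun q : Fin (r + 1) =>
                emb 0 (v (p.succAbove q)) / emb 0 (v p)
                  - emb k (v (p.succAbove q)) / emb k (v p))
              (fun q : Fin (r + 1) => x (p.succAbove q)) * (L k - L 0)) := by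
            refine Finset.sum_congr rfl fun p _ => ?_
            rw [hZeq 0 k p, hLog 0 k p, mul_add]
        _ = _ := by
            rw [Finset.sum_add_distrib, ← Finset.sum_mul, hS 0 k hk0]
    have hsum2 : ∀ i : Fin (n + 2),
        ∑ k ∈ Finset.univ.filter (fun k : Fin (n + 2) => i < k), ∑ p : Fin (r + 2),
          zetaFml 2 (fun q : Fin (r + 1) =>
              emb i (α⁻¹ * v (p.succAbove q)) / emb i (α⁻¹ * v p)
                - emb k (α⁻¹ * v (p.succAbove q)) / emb k (α⁻¹ * v p))
            (fun q : Fin (r + 1) => x (p.succAbove q))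
          * Real.log |emb i (α⁻¹ * v p) / emb k (α⁻¹ * v p)|
        = (∑ k ∈ Finset.univ.filter (fun k : Fin (n + 2) => i < k), ∑ p : Fin (r + 2),
            zetaFml 2 (fun q : Fin (r + 1) =>
                emb i (v (p.succAbove q)) / emb i (v p)
                  - emb k (v (p.succAbove q)) / emb k (v p))
              (fun q : Fin (r + 1) => x (p.succAbove q))
            * Real.log |emb i (v p) / emb k (v p)|)
          + ∑ k ∈ Finset.univ.filter (fun k : Fin (n + 2) => i < k),
              (ζ k - ζ i) * (L k - L i) := by
      intro i
      rw [← Finset.sum_add_distrib]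
      refine Finset.sum_congr rfl fun k hk => ?_
      have hik : i ≠ k := ne_of_lt (Finset.mem_filter.mp hk).2
      calc ∑ p : Fin (r + 2), _ * _
          = ∑ p : Fin (r + 2),
            (zetaFml 2 (fun q : Fin (r + 1) =>
                emb i (v (p.succAbove q)) / emb i (v p)
                  - emb k (v (p.succAbove q)) / emb k (v p))
              (fun q : Fin (r + 1) => x (p.succAbove q))
            * Real.log |emb i (v p) / emb k (v p)|
            + zetaFml 2 (fun q : Fin (r + 1) =>
                emb i (v (p.succAbove q)) / emb i (v p)
                  - emb k (v (p.succAbove q)) / emb k (v p))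
              (fun q : Fin (r + 1) => x (p.succAbove q)) * (L k - L i)) := by
            refine Finset.sum_congr rfl fun p _ => ?_
            rw [hZeq i k p, hLog i k p, mul_add]
        _ = _ := by
            rw [Finset.sum_add_distrib, ← Finset.sum_mul, hS i k hik]
    have hcast : ((n + 1 : ℕ) : ℝ) + 1 = (n : ℝ) + 2 := by push_cast; ring
    have halg : -(1 / (n + 2 : ℝ)) * ∑ k ∈ Finset.univ.filter (fun k : Fin (n + 2) => k ≠ 0),
          (ζ k - ζ 0) * (L k - L 0)
        + (1 / (n + 2 : ℝ) ^ 2) * ∑ i : Fin (n + 2),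
            ∑ k ∈ Finset.univ.filter (fun k : Fin (n + 2) => i < k), (ζ k - ζ i) * (L k - L i)
        = ((1 / (n + 2 : ℝ)) * ∑ k, L k - L 0) * (ζ 0 - (1 / (n + 2 : ℝ)) * ∑ k, ζ k) := by
      have h := alg_lemma (n + 1) ζ L
      rw [hcast] at h
      exact h
    unfold Vterm
    rw [hsum1, Finset.sum_congr rfl fun i _ => hsum2 i, Finset.sum_add_distrib, hcast]
    linear_combination halg
  refine ⟨hmain, fun hpos => ?_⟩
  rw [hmain]
  have hlp : Real.log (∏ k : Fin (n + 2), emb k α) = ∑ k : Fin (n + 2), Real.log (emb k α) :=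
    Real.log_prod (fun k _ => ne_of_gt (hpos k))
  have hla : ∀ k : Fin (n + 2), Real.log (emb k α) = L k := fun k => by
    show Real.log (emb k α) = Real.log |emb k α|
    rw [abs_of_pos (hpos k)]
  rw [hlp, Finset.sum_congr rfl fun k _ => hla k, hla 0]
end

section
/- Let F be a totally real number field of degree n ≥ 2 with real embeddings ι₁,…,ι_n, let r ≥ 2, and let v = (v_1,…,v_r) ∈ F^r with all v_p ≠ 0 and v_1 + v_2 ≠ 0. Set v♯ := (v_1, v_1+v_2, v_3,…,v_r), v♭ := (v_1+v_2, v_2, v_3,…,v_r) and v♮ := (v_1+v_2, v_3,…,v_r), and assume each of the three tuples v, v♯, v♭ satisfies the nondegeneracy condition ι_i(w_q)ι_k(w_p) ≠ ι_i(w_p)ι_k(w_q) for all i ≠ k and p ≠ q (w denoting the respective tuple), and likewise for v♮. Then for every x = (x_1,…,x_r) ∈ ℝ^r: (a) V(v, x) = V(v♯, (x_1−x_2+1, x_2, x_3,…,x_r)) + V(v♭, (x_1, x_2−x_1, x_3,…,x_r)); and (b) for every x ∈ ℝ and x_3,…,x_r ∈ ℝ, V(v, (x, x, x_3,…,x_r))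 = V(v♯, (1, x, x_3,…,x_r)) + V(v♭, (x, 1, x_3,…,x_r)) + V(v♮, (x, x_3,…,x_r)). -/
open scoped BigOperators

open PowerSeries

noncomputable def Eexp (a : ℝ) : PowerSeries ℝ := rescale a (PowerSeries.exp ℝ)

noncomputable def gser (a x : ℝ) : PowerSeries ℝ :=
  PowerSeries.mk fun l =>
    Polynomial.aeval x (Polynomial.bernoulli l) * a ^ ((l : ℤ) - 1) / (Nat.factorial l)

lemma Eexp_add (a b : ℝ) : Eexp a * Eexp b = Eexp (a + b) :=
  PowerSeries.exp_mul_exp_eq_exp_add a b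

lemma Eexp_zero : Eexp 0 = 1 := by
  simp [Eexp, rescale_zero]

lemma Eexp_sub_one_ne_zero {a : ℝ} (ha : a ≠ 0) : Eexp a - 1 ≠ 0 := by
  intro h
  apply ha
  have := congrArg (PowerSeries.coeff 1) h
  simpa [Eexp, coeff_rescale, PowerSeries.coeff_exp] using this

lemma C_ne_zero {a : ℝ} (ha : a ≠ 0) : (PowerSeries.C a) ≠ 0 := by
  intro h
  apply ha
  simpa using congrArg (PowerSeries.constantCoeff) h

lemma rescale_X (a : ℝ) : rescale a (PowerSeries.X : PowerSeries ℝ) = PowerSeries.C a * PowerSeries.X := by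
  ext n
  simp only [coeff_rescale, PowerSeries.coeff_C_mul, PowerSeries.coeff_X]
  rcases eq_or_ne n 1 with rfl | h
  · simp
  · simp [h]

lemma gkey {a : ℝ} (ha : a ≠ 0) (x : ℝ) :
    gser a x * (Eexp a - 1) = PowerSeries.X * Eexp (a * x) := by
  have H := Polynomial.bernoulli_generating_function (A := ℝ) x
  have H2 := congrArg (rescale a) H
  rw [map_mul, map_sub, map_one, map_mul] at H2
  rw [rescale_X, rescale_rescale] at H2
  have hg : rescale a (PowerSeries.mk fun n => Polynomial.aeval x ((1 / (n.factorial : ℚ)) • Polynomial.bernoulli n))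
      = PowerSeries.C a * gser a x := by
    rw [rescale_mk]
    ext n
    simp only [PowerSeries.coeff_mk, PowerSeries.coeff_C_mul, gser, map_smul]
    have hzp : a * a ^ ((n : ℤ) - 1) = a ^ (n : ℕ) := by
      rw [← zpow_natCast a n, sub_eq_add_neg, zpow_add₀ ha, zpow_neg, zpow_one]
      field_simp
    rw [Rat.smul_def]
    push_cast
    rw [div_eq_mul_inv, ← hzp]
    ring
  rw [hg] at H2
  apply mul_left_cancel₀ (C_ne_zero ha)
  calc PowerSeries.C a * (gser a x * (Eexp a - 1))
      = PowerSeries.C a * gser a x * (rescale a (PowerSeries.exp ℝ) - 1) := by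
        rw [Eexp]; ring
    _ = PowerSeries.C a * PowerSeries.X * rescale (x * a) (PowerSeries.exp ℝ) := H2
    _ = PowerSeries.C a * (PowerSeries.X * Eexp (a * x)) := by
        rw [Eexp, mul_comm x a]; ring

lemma Eexp_congr {a b : ℝ} (h : a = b) : Eexp a = Eexp b := by rw [h]

lemma G5 {a : ℝ} (ha : a ≠ 0) : gser a 1 - gser a 0 = PowerSeries.X := by
  apply mul_right_cancel₀ (Eexp_sub_one_ne_zero ha)
  rw [sub_mul, gkey ha, gkey ha, mul_one, mul_zero, Eexp_zero]
  ring

lemma G2 {a : ℝ} (ha : a ≠ 0) (x : ℝ) : gser (-a) (1 - x) = - gser a x := by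
  have hna : (-a : ℝ) ≠ 0 := neg_ne_zero.mpr ha
  apply mul_right_cancel₀ (Eexp_sub_one_ne_zero hna)
  rw [gkey hna]
  have k := gkey ha x
  have e : Eexp (-a) * Eexp a = 1 := by rw [Eexp_add, neg_add_cancel, Eexp_zero]
  have m : Eexp (-a * (1 - x)) = Eexp (a * x) * Eexp (-a) := by
    rw [Eexp_add]; exact Eexp_congr (by ring)
  linear_combination PowerSeries.X * m - Eexp (-a) * k + gser a x * e

lemma G3 {a : ℝ} (ha : a ≠ 0) : gser a 1 + gser (-a) 1 = PowerSeries.X := by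
  have := G2 ha 0
  rw [sub_zero] at this
  rw [this]
  linear_combination G5 ha

lemma G1 {a0 a1 : ℝ} (h0 : a0 ≠ 0) (h1 : a1 ≠ 0) (hs : a0 + a1 ≠ 0) (x0 x1 : ℝ) :
    gser a0 x0 * gser a1 x1
      = gser a0 (x0 - x1 + 1) * gser (a0 + a1) x1 + gser (a0 + a1) x0 * gser a1 (x1 - x0) := by
  have hz : (Eexp a0 - 1) * (Eexp a1 - 1) * (Eexp (a0 + a1) - 1) ≠ 0 :=
    mul_ne_zero (mul_ne_zero (Eexp_sub_one_ne_zero h0) (Eexp_sub_one_ne_zero h1))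
      (Eexp_sub_one_ne_zero hs)
  apply mul_right_cancel₀ hz
  set W := Eexp (a0 * x0 + a1 * x1) with hW
  have k1 := gkey h0 x0
  have k2 := gkey h1 x1
  have k3 := gkey h0 (x0 - x1 + 1)
  have k4 := gkey hs x1
  have k5 := gkey hs x0
  have k6 := gkey h1 (x1 - x0)
  have m1 : Eexp (a0 * x0) * Eexp (a1 * x1) = W := by rw [Eexp_add]
  have m2 : Eexp (a0 * (x0 - x1 + 1)) * Eexp ((a0 + a1) * x1) = W * Eexp a0 := by
    rw [Eexp_add, hW, Eexp_add]; exact Eexp_congr (by ring)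
  have m3 : Eexp ((a0 + a1) * x0) * Eexp (a1 * (x1 - x0)) = W := by
    rw [Eexp_add]; exact Eexp_congr (by ring)
  have m5 : Eexp a0 * Eexp a1 = Eexp (a0 + a1) := Eexp_add a0 a1
  have hL : gser a0 x0 * gser a1 x1 * ((Eexp a0 - 1) * (Eexp a1 - 1) * (Eexp (a0 + a1) - 1))
      = PowerSeries.X ^ 2 * W * (Eexp (a0 + a1) - 1) := by
    calc gser a0 x0 * gser a1 x1 * ((Eexp a0 - 1) * (Eexp a1 - 1) * (Eexp (a0 + a1) - 1))
        = (gser a0 x0 * (Eexp a0 - 1)) * (gser a1 x1 * (Eexp a1 - 1)) * (Eexp (a0 + a1) - 1) := by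
          ring
      _ = (PowerSeries.X * Eexp (a0 * x0)) * (PowerSeries.X * Eexp (a1 * x1)) * (Eexp (a0 + a1) - 1) := by
          rw [k1, k2]
      _ = PowerSeries.X ^ 2 * (Eexp (a0 * x0) * Eexp (a1 * x1)) * (Eexp (a0 + a1) - 1) := by ring
      _ = PowerSeries.X ^ 2 * W * (Eexp (a0 + a1) - 1) := by rw [m1]
  have hR1 : gser a0 (x0 - x1 + 1) * gser (a0 + a1) x1
        * ((Eexp a0 - 1) * (Eexp a1 - 1) * (Eexp (a0 + a1) - 1))
      = PowerSeries.X ^ 2 * (W * Eexp a0) * (Eexp a1 - 1) := by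
    calc gser a0 (x0 - x1 + 1) * gser (a0 + a1) x1
          * ((Eexp a0 - 1) * (Eexp a1 - 1) * (Eexp (a0 + a1) - 1))
        = (gser a0 (x0 - x1 + 1) * (Eexp a0 - 1)) * (gser (a0 + a1) x1 * (Eexp (a0 + a1) - 1))
            * (Eexp a1 - 1) := by ring
      _ = (PowerSeries.X * Eexp (a0 * (x0 - x1 + 1))) * (PowerSeries.X * Eexp ((a0 + a1) * x1))
            * (Eexp a1 - 1) := by rw [k3, k4]
      _ = PowerSeries.X ^ 2 * (Eexp (a0 * (x0 - x1 + 1)) * Eexp ((a0 + a1) * x1))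
            * (Eexp a1 - 1) := by ring
      _ = PowerSeries.X ^ 2 * (W * Eexp a0) * (Eexp a1 - 1) := by rw [m2]
  have hR2 : gser (a0 + a1) x0 * gser a1 (x1 - x0)
        * ((Eexp a0 - 1) * (Eexp a1 - 1) * (Eexp (a0 + a1) - 1))
      = PowerSeries.X ^ 2 * W * (Eexp a0 - 1) := by
    calc gser (a0 + a1) x0 * gser a1 (x1 - x0)
          * ((Eexp a0 - 1) * (Eexp a1 - 1) * (Eexp (a0 + a1) - 1))
        = (gser (a0 + a1) x0 * (Eexp (a0 + a1) - 1)) * (gser a1 (x1 - x0) * (Eexp a1 - 1))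
            * (Eexp a0 - 1) := by ring
      _ = (PowerSeries.X * Eexp ((a0 + a1) * x0)) * (PowerSeries.X * Eexp (a1 * (x1 - x0)))
            * (Eexp a0 - 1) := by rw [k5, k6]
      _ = PowerSeries.X ^ 2 * (Eexp ((a0 + a1) * x0) * Eexp (a1 * (x1 - x0))) * (Eexp a0 - 1) := by
          ring
      _ = PowerSeries.X ^ 2 * W * (Eexp a0 - 1) := by rw [m3]
  rw [add_mul, hL, hR1, hR2]
  linear_combination (-(PowerSeries.X ^ 2 * W)) * m5

lemma zetaFml_eq_coeff (m : ℕ) {r : ℕ} (a x : Fin r → ℝ) :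
    zetaFml m a x = (-1 : ℝ) ^ r * (Nat.factorial (m - 1)) *
      PowerSeries.coeff (m + r - 1) (∏ i, gser (a i) (x i)) := by
  unfold zetaFml
  congr 1
  rw [PowerSeries.coeff_prod]
  refine Finset.sum_nbij' (fun l => Finsupp.equivFunOnFinite.symm l) (fun l => ⇑l)
    ?_ ?_ ?_ ?_ ?_
  · intro l hl
    rw [Finset.mem_finsuppAntidiag]
    refine ⟨?_, Finset.subset_univ _⟩
    simpa using Finset.Nat.mem_antidiagonalTuple.mp hl
  · intro l hl
    rw [Finset.mem_finsuppAntidiag] at hl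
    exact Finset.Nat.mem_antidiagonalTuple.mpr (by simpa using hl.1)
  · intro l _
    exact Finsupp.equivFunOnFinite.apply_symm_apply l
  · intro l _
    exact Finsupp.equivFunOnFinite_symm_coe l
  · intro l _
    refine Finset.prod_congr rfl fun q _ => ?_
    simp [gser]

open Finset Function

lemma zetaFml_two {r : ℕ} (a x : Fin r → ℝ) :
    zetaFml 2 a x = (-1 : ℝ) ^ r * PowerSeries.coeff (r + 1) (∏ i, gser (a i) (x i)) := by
  rw [zetaFml_eq_coeff]
  have h : 2 + r - 1 = r + 1 := by omega
  rw [h]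
  norm_num [Nat.factorial]

lemma prod_split {r : ℕ} (i j : Fin r) (hij : i ≠ j) (f : Fin r → PowerSeries ℝ) :
    ∏ q, f q = f i * f j * ∏ q ∈ (univ.erase i).erase j, f q := by
  rw [mul_assoc, Finset.mul_prod_erase _ _ (Finset.mem_erase.mpr ⟨hij.symm, Finset.mem_univ j⟩),
    Finset.mul_prod_erase _ _ (Finset.mem_univ i)]

lemma zeta_L1 {r : ℕ} (A X : Fin r → ℝ) (i j : Fin r) (hij : i ≠ j)
    (h0 : A i ≠ 0) (h1 : A j ≠ 0) (hs : A i + A j ≠ 0) :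
    zetaFml 2 A X
      = zetaFml 2 (update A j (A i + A j)) (update X i (X i - X j + 1))
        + zetaFml 2 (update A i (A i + A j)) (update X j (X j - X i)) := by
  rw [zetaFml_two, zetaFml_two, zetaFml_two]
  set R := ∏ q ∈ (univ.erase i).erase j, gser (A q) (X q) with hR
  have e1 : ∏ q, gser (A q) (X q) = gser (A i) (X i) * gser (A j) (X j) * R :=
    prod_split i j hij _
  have e2 : ∏ q, gser (update A j (A i + A j) q) (update X i (X i - X j + 1) q)
      = gser (A i) (X i - X j + 1) * gser (A i + A j) (X j) * R := by
    rw [prod_split i j hij]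
    congr 1
    · rw [update_of_ne hij, update_self, update_self, update_of_ne hij.symm]
    · refine Finset.prod_congr rfl fun q hq => ?_
      rw [Finset.mem_erase, Finset.mem_erase] at hq
      rw [update_of_ne hq.1, update_of_ne hq.2.1]
  have e3 : ∏ q, gser (update A i (A i + A j) q) (update X j (X j - X i) q)
      = gser (A i + A j) (X i) * gser (A j) (X j - X i) * R := by
    rw [prod_split i j hij]
    congr 1
    · rw [update_self, update_of_ne hij, update_of_ne hij.symm, update_self]
    · refine Finset.prod_congr rfl fun q hq => ?_
      rw [Finset.mem_erase, Finset.mem_erase] at hq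
      rw [update_of_ne hq.2.1, update_of_ne hq.1]
  rw [e1, e2, e3, ← mul_add, ← map_add, ← add_mul, ← G1 h0 h1 hs]

lemma zeta_L2 {r : ℕ} (A X : Fin r → ℝ) (i : Fin r) (h0 : A i ≠ 0) :
    zetaFml 2 (update A i (-(A i))) (update X i (1 - X i)) = - zetaFml 2 A X := by
  rw [zetaFml_two, zetaFml_two]
  have e1 : ∏ q, gser (A q) (X q) = gser (A i) (X i) * ∏ q ∈ univ.erase i, gser (A q) (X q) :=
    (Finset.mul_prod_erase _ _ (Finset.mem_univ i)).symm
  have e2 : ∏ q, gser (update A i (-(A i)) q) (update X i (1 - X i) q)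
      = gser (-(A i)) (1 - X i) * ∏ q ∈ univ.erase i, gser (A q) (X q) := by
    rw [← Finset.mul_prod_erase _ _ (Finset.mem_univ i), update_self, update_self]
    congr 1
    refine Finset.prod_congr rfl fun q hq => ?_
    rw [Finset.mem_erase] at hq
    rw [update_of_ne hq.1, update_of_ne hq.1]
  rw [e1, e2, G2 h0, neg_mul, map_neg]
  ring

lemma prod_split_succAbove {u : ℕ} (j : Fin (u + 1)) (B Y : Fin (u + 1) → ℝ) :
    ∏ q, gser (B q) (Y q)
      = gser (B j) (Y j) * ∏ q : Fin u, gser (B (j.succAbove q)) (Y (j.succAbove q)) :=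
  Fin.prod_univ_succAbove (fun q => gser (B q) (Y q)) j

lemma zeta_L5 {u : ℕ} (A X : Fin (u + 1) → ℝ) (j : Fin (u + 1)) (h0 : A j ≠ 0) :
    zetaFml 2 A (update X j 0)
      = zetaFml 2 A (update X j 1)
        + zetaFml 2 (A ∘ j.succAbove) (X ∘ j.succAbove) := by
  rw [zetaFml_two, zetaFml_two, zetaFml_two]
  set Q := ∏ q : Fin u, gser (A (j.succAbove q)) (X (j.succAbove q)) with hQ
  have hup : ∀ c : ℝ, ∏ q, gser (A q) (update X j c q) = gser (A j) c * Q := by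
    intro c
    rw [prod_split_succAbove j, update_self]
    congr 1
    exact Finset.prod_congr rfl fun q _ => by rw [update_of_ne (Fin.succAbove_ne j q)]
  have hcomp : ∏ q : Fin u, gser ((A ∘ j.succAbove) q) ((X ∘ j.succAbove) q) = Q :=
    Finset.prod_congr rfl fun q _ => rfl
  rw [hup 0, hup 1, hcomp]
  have key : gser (A j) 0 * Q = gser (A j) 1 * Q - PowerSeries.X * Q := by
    rw [← sub_mul, ← G5 h0]; ring
  rw [key, map_sub, PowerSeries.coeff_succ_X_mul]
  ring

lemma zeta_L3 {u : ℕ} (A X : Fin (u + 1) → ℝ) (j : Fin (u + 1)) (h0 : A j ≠ 0)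
    (hXj : X j = 1) :
    zetaFml 2 A X + zetaFml 2 (update A j (-(A j))) X
      + zetaFml 2 (A ∘ j.succAbove) (X ∘ j.succAbove) = 0 := by
  rw [zetaFml_two, zetaFml_two, zetaFml_two]
  set Q := ∏ q : Fin u, gser (A (j.succAbove q)) (X (j.succAbove q)) with hQ
  have e1 : ∏ q, gser (A q) (X q) = gser (A j) 1 * Q := by
    rw [prod_split_succAbove j, hXj]
  have e2 : ∏ q, gser (update A j (-(A j)) q) (X q) = gser (-(A j)) 1 * Q := by
    rw [prod_split_succAbove j, update_self, hXj]
    congr 1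
    exact Finset.prod_congr rfl fun q _ => by rw [update_of_ne (Fin.succAbove_ne j q)]
  have e3 : ∏ q : Fin u, gser ((A ∘ j.succAbove) q) ((X ∘ j.succAbove) q) = Q :=
    Finset.prod_congr rfl fun q _ => rfl
  rw [e1, e2, e3]
  have key : gser (A j) 1 * Q + gser (-(A j)) 1 * Q = PowerSeries.X * Q := by
    rw [← add_mul, G3 h0]
  have := congrArg (fun z => ((-1 : ℝ)) ^ (u + 1) * PowerSeries.coeff (u + 1 + 1) z) key
  simp only [map_add, PowerSeries.coeff_succ_X_mul, pow_succ] at this ⊢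
  linear_combination this

lemma zeta_L4 {u : ℕ} (A X : Fin (u + 1) → ℝ) (i j : Fin (u + 1)) (hij : i ≠ j)
    (h0 : A i ≠ 0) (h1 : A j ≠ 0) (hs : A i + A j ≠ 0) (hx : X i = X j) :
    zetaFml 2 A X
      = zetaFml 2 (update A j (A i + A j)) (update X i 1)
        + zetaFml 2 (update A i (A i + A j)) (update X j 1)
        + zetaFml 2 ((update A i (A i + A j)) ∘ j.succAbove) (X ∘ j.succAbove) := by
  have h1' : X i - X j + 1 = 1 := by rw [hx]; ring
  have h0' : X j - X i = 0 := by rw [hx]; ring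
  have L1 := zeta_L1 A X i j hij h0 h1 hs
  rw [h1', h0'] at L1
  have L5 := zeta_L5 (update A i (A i + A j)) X j (by rwa [update_of_ne hij.symm])
  rw [L1, L5]
  ring

/-! ### index and nonvanishing helpers -/

lemma succAbove_coe {n : ℕ} (p : Fin (n + 1)) (q : Fin n) :
    ((p.succAbove q : Fin (n + 1)) : ℕ) = if (q : ℕ) < (p : ℕ) then (q : ℕ) else (q : ℕ) + 1 := by
  rw [Fin.succAbove]
  split_ifs with h h2 h3
  · rfl
  · exact absurd (by simpa [Fin.lt_def] using h) h2
  · exact absurd (by simpa [Fin.lt_def] using h3) h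
  · rfl

lemma ndiff {A B C D : ℝ} (hB : B ≠ 0) (hD : D ≠ 0) (h : A * D ≠ B * C) :
    A / B - C / D ≠ 0 := by
  intro hc
  apply h
  have h2 : A / B = C / D := sub_eq_zero.mp hc
  rw [div_eq_div_iff hB hD] at h2
  rw [h2]; ring

lemma map_ne' {F : Type*} [Field F] (σ : F →+* ℝ) {y : F} (hy : y ≠ 0) : σ y ≠ 0 :=
  fun h => hy (σ.injective (by rw [h, map_zero]))

/-! ### the inner sum of the V-term for a fixed pair of embeddings -/

noncomputable def Tterm {F : Type*} [Field F] (σ τ : F →+* ℝ) {s : ℕ}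
    (v : Fin (s + 1) → F) (x : Fin (s + 1) → ℝ) (p : Fin (s + 1)) : ℝ :=
  zetaFml 2
    (fun q : Fin s => σ (v (p.succAbove q)) / σ (v p) - τ (v (p.succAbove q)) / τ (v p))
    (fun q : Fin s => x (p.succAbove q))
  * Real.log |σ (v p) / τ (v p)|

noncomputable def Jterm {F : Type*} [Field F] (σ τ : F →+* ℝ) {s : ℕ}
    (v : Fin (s + 1) → F) (x : Fin (s + 1) → ℝ) : ℝ :=
  ∑ p : Fin (s + 1), Tterm σ τ v x p

lemma Jterm_expand {F : Type*} [Field F] (σ τ : F →+* ℝ) {r : ℕ}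
    (v : Fin (r + 2) → F) (x : Fin (r + 2) → ℝ) :
    Jterm σ τ v x = Tterm σ τ v x 0 + Tterm σ τ v x 1
      + ∑ t : Fin r, Tterm σ τ v x t.succ.succ := by
  rw [Jterm, Fin.sum_univ_succ, Fin.sum_univ_succ, Fin.succ_zero_eq_one, ← add_assoc]

section Jsub
variable {F : Type*} [Field F] (σ τ : F →+* ℝ) {r : ℕ} (v : Fin (r + 2) → F) (x : Fin (r + 2) → ℝ)

lemma fin_one_ne_zero' : (1 : Fin (r + 2)) ≠ 0 :=
  Fin.ne_of_val_ne (by simp)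

lemma succAbove_one_zero : (1 : Fin (r + 2)).succAbove 0 = 0 :=
  Fin.ext (by simp [succAbove_coe])

lemma succAbove_one_ne_zero {q : Fin (r + 1)} (hq : q ≠ 0) :
    (1 : Fin (r + 2)).succAbove q = q.succ := by
  have hq' : (q : ℕ) ≠ 0 := fun h => hq (Fin.ext (by simp [h]))
  exact Fin.ext (by simp [succAbove_coe]; omega)

lemma succ_ne_one' {q : Fin (r + 1)} (hq : q ≠ 0) : q.succ ≠ (1 : Fin (r + 2)) := by
  intro h
  exact hq (Fin.succ_injective _ (h.trans Fin.succ_zero_eq_one.symm))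

lemma Tsub_e0 (c : ℝ) (h0σ : σ (v 0) ≠ 0) (h0τ : τ (v 0) ≠ 0) :
    Tterm σ τ (Function.update v 1 (v 0 + v 1)) (Function.update x 0 c) 0
      = Tterm σ τ v x 0 := by
  unfold Tterm
  have hv0 : Function.update v 1 (v 0 + v 1) 0 = v 0 :=
    Function.update_of_ne (fin_one_ne_zero').symm _ _
  have hX : (fun q : Fin (r + 1) =>
        Function.update x 0 c ((0 : Fin (r + 2)).succAbove q))
      = fun q => x ((0 : Fin (r + 2)).succAbove q) := by
    funext q
    rw [Fin.succAbove_zero]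
    exact Function.update_of_ne (Fin.succ_ne_zero q) _ _
  have hAfun : (fun q : Fin (r + 1) =>
        σ (Function.update v 1 (v 0 + v 1) ((0 : Fin (r + 2)).succAbove q))
            / σ (Function.update v 1 (v 0 + v 1) 0)
          - τ (Function.update v 1 (v 0 + v 1) ((0 : Fin (r + 2)).succAbove q))
            / τ (Function.update v 1 (v 0 + v 1) 0))
      = fun q => σ (v ((0 : Fin (r + 2)).succAbove q)) / σ (v 0)
          - τ (v ((0 : Fin (r + 2)).succAbove q)) / τ (v 0) := by
    funext q
    rw [hv0, Fin.succAbove_zero]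
    by_cases hq : q = 0
    · subst hq
      rw [Fin.succ_zero_eq_one, Function.update_self, map_add, map_add, add_div, add_div,
        div_self h0σ, div_self h0τ]
      ring
    · rw [Function.update_of_ne (succ_ne_one' hq)]
  rw [hX, hAfun, hv0]

lemma Tsub_e1 (c : ℝ) (h1σ : σ (v 1) ≠ 0) (h1τ : τ (v 1) ≠ 0) :
    Tterm σ τ (Function.update v 0 (v 0 + v 1)) (Function.update x 1 c) 1
      = Tterm σ τ v x 1 := by
  unfold Tterm
  have hv1 : Function.update v 0 (v 0 + v 1) 1 = v 1 :=
    Function.update_of_ne (fin_one_ne_zero') _ _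
  have hX : (fun q : Fin (r + 1) =>
        Function.update x 1 c ((1 : Fin (r + 2)).succAbove q))
      = fun q => x ((1 : Fin (r + 2)).succAbove q) := by
    funext q
    by_cases hq : q = 0
    · subst hq
      rw [succAbove_one_zero, Function.update_of_ne (fin_one_ne_zero').symm]
    · rw [succAbove_one_ne_zero hq, Function.update_of_ne (succ_ne_one' hq)]
  have hAfun : (fun q : Fin (r + 1) =>
        σ (Function.update v 0 (v 0 + v 1) ((1 : Fin (r + 2)).succAbove q))
            / σ (Function.update v 0 (v 0 + v 1) 1)
          - τ (Function.update v 0 (v 0 + v 1) ((1 : Fin (r + 2)).succAbove q))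
            / τ (Function.update v 0 (v 0 + v 1) 1))
      = fun q => σ (v ((1 : Fin (r + 2)).succAbove q)) / σ (v 1)
          - τ (v ((1 : Fin (r + 2)).succAbove q)) / τ (v 1) := by
    funext q
    rw [hv1]
    by_cases hq : q = 0
    · subst hq
      rw [succAbove_one_zero, Function.update_self, map_add, map_add, add_div, add_div,
        div_self h1σ, div_self h1τ]
      ring
    · rw [succAbove_one_ne_zero hq, Function.update_of_ne (Fin.succ_ne_zero q)]
  rw [hX, hAfun, hv1]

lemma Tsub_e2 (hs'σ : σ (v 0 + v 1) ≠ 0) (hs'τ : τ (v 0 + v 1) ≠ 0)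
    (hS0 : σ (v 0) * τ (v 0 + v 1) ≠ σ (v 0 + v 1) * τ (v 0)) :
    Tterm σ τ (Function.update v 1 (v 0 + v 1)) (Function.update x 0 (x 0 - x 1 + 1)) 1
      + Tterm σ τ (Function.update v 0 (v 0 + v 1)) (Function.update x 1 (x 1 - x 0)) 0 = 0 := by
  have key : ∀ (ρ : F →+* ℝ), ρ (v 0 + v 1) ≠ 0 →
      ρ (v 1) / ρ (v 0 + v 1) = 1 - ρ (v 0) / ρ (v 0 + v 1) := by
    intro ρ hρ
    rw [eq_sub_iff_add_eq, ← add_div, add_comm, ← map_add, div_self hρ]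
  unfold Tterm
  rw [Function.update_self, Function.update_self]
  set A1 : Fin (r + 1) → ℝ := fun q =>
    σ (Function.update v 1 (v 0 + v 1) ((1 : Fin (r + 2)).succAbove q)) / σ (v 0 + v 1)
      - τ (Function.update v 1 (v 0 + v 1) ((1 : Fin (r + 2)).succAbove q)) / τ (v 0 + v 1)
    with hA1def
  set X1 : Fin (r + 1) → ℝ := fun q =>
    Function.update x 0 (x 0 - x 1 + 1) ((1 : Fin (r + 2)).succAbove q) with hX1def
  have hA10 : A1 0 = σ (v 0) / σ (v 0 + v 1) - τ (v 0) / τ (v 0 + v 1) := by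
    rw [hA1def]
    simp only
    rw [succAbove_one_zero, Function.update_of_ne (fin_one_ne_zero').symm]
  have hX10 : X1 0 = x 0 - x 1 + 1 := by
    rw [hX1def]
    simp only
    rw [succAbove_one_zero, Function.update_self]
  have c1 : (fun q : Fin (r + 1) =>
        σ (Function.update v 0 (v 0 + v 1) ((0 : Fin (r + 2)).succAbove q)) / σ (v 0 + v 1)
          - τ (Function.update v 0 (v 0 + v 1) ((0 : Fin (r + 2)).succAbove q)) / τ (v 0 + v 1))
      = Function.update A1 0 (-(A1 0)) := by
    funext q
    rw [Fin.succAbove_zero]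
    by_cases hq : q = 0
    · subst hq
      rw [Function.update_self, Fin.succ_zero_eq_one,
        Function.update_of_ne (fin_one_ne_zero'), hA10, key σ hs'σ, key τ hs'τ]
      ring
    · rw [Function.update_of_ne (Fin.succ_ne_zero q), Function.update_of_ne hq, hA1def]
      simp only
      rw [succAbove_one_ne_zero hq, Function.update_of_ne (succ_ne_one' hq)]
  have c2 : (fun q : Fin (r + 1) =>
        Function.update x 1 (x 1 - x 0) ((0 : Fin (r + 2)).succAbove q))
      = Function.update X1 0 (1 - X1 0) := by
    funext q
    rw [Fin.succAbove_zero]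
    by_cases hq : q = 0
    · subst hq
      rw [Fin.succ_zero_eq_one, Function.update_self, Function.update_self, hX10]
      ring
    · rw [Function.update_of_ne (succ_ne_one' hq), Function.update_of_ne hq, hX1def]
      simp only
      rw [succAbove_one_ne_zero hq, Function.update_of_ne (Fin.succ_ne_zero q)]
  have h0A : A1 0 ≠ 0 := by
    rw [hA10]
    exact ndiff hs'σ hs'τ hS0
  rw [c1, c2, zeta_L2 A1 X1 0 h0A]
  ring

lemma Tsub_e3 (t : Fin r)
    (hpσ : σ (v t.succ.succ) ≠ 0) (hpτ : τ (v t.succ.succ) ≠ 0)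
    (hA0 : σ (v 0) * τ (v t.succ.succ) ≠ σ (v t.succ.succ) * τ (v 0))
    (hA1 : σ (v 1) * τ (v t.succ.succ) ≠ σ (v t.succ.succ) * τ (v 1))
    (hSp : σ (v 0 + v 1) * τ (v t.succ.succ) ≠ σ (v t.succ.succ) * τ (v 0 + v 1)) :
    Tterm σ τ v x t.succ.succ
      = Tterm σ τ (Function.update v 1 (v 0 + v 1))
          (Function.update x 0 (x 0 - x 1 + 1)) t.succ.succ
        + Tterm σ τ (Function.update v 0 (v 0 + v 1))
          (Function.update x 1 (x 1 - x 0)) t.succ.succ := by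
  have hr : 0 < r := t.pos
  set p : Fin (r + 2) := t.succ.succ with hpdef
  have hpval : (p : ℕ) = (t : ℕ) + 2 := by
    rw [hpdef, Fin.val_succ, Fin.val_succ]
  have hp0 : p ≠ 0 := Fin.ne_of_val_ne (by rw [hpval, Fin.val_zero]; omega)
  have hp1 : p ≠ (1 : Fin (r + 2)) := Fin.ne_of_val_ne (by rw [hpval, Fin.val_one]; omega)
  have ip0 : p.succAbove 0 = 0 := by
    apply Fin.ext
    rw [succAbove_coe, Fin.val_zero, Fin.val_zero, hpval, if_pos (by omega)]
  have h1v : ((1 : Fin (r + 1)) : ℕ) = 1 := by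
    rw [Fin.val_one']
    exact Nat.mod_eq_of_lt (by omega)
  have ip1 : p.succAbove (1 : Fin (r + 1)) = 1 := by
    apply Fin.ext
    rw [succAbove_coe, h1v, Fin.val_one, hpval, if_pos (by omega)]
  have h01 : (0 : Fin (r + 1)) ≠ 1 := by
    apply Fin.ne_of_val_ne
    rw [Fin.val_zero, h1v]
    omega
  have iq0 : ∀ q : Fin (r + 1), q ≠ 0 → p.succAbove q ≠ 0 := by
    intro q hq h
    exact hq (Fin.succAbove_right_injective (h.trans ip0.symm))
  have iq1 : ∀ q : Fin (r + 1), q ≠ 1 → p.succAbove q ≠ 1 := by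
    intro q hq h
    exact hq (Fin.succAbove_right_injective (h.trans ip1.symm))
  unfold Tterm
  rw [Function.update_of_ne hp1, Function.update_of_ne hp0]
  set A : Fin (r + 1) → ℝ := fun q =>
    σ (v (p.succAbove q)) / σ (v p) - τ (v (p.succAbove q)) / τ (v p) with hAdef
  set Xd : Fin (r + 1) → ℝ := fun q => x (p.succAbove q) with hXdef
  have hA0v : A 0 = σ (v 0) / σ (v p) - τ (v 0) / τ (v p) := by
    rw [hAdef]; simp only; rw [ip0]
  have hA1v : A 1 = σ (v 1) / σ (v p) - τ (v 1) / τ (v p) := by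
    rw [hAdef]; simp only; rw [ip1]
  have hsum : A 0 + A 1 = σ (v 0 + v 1) / σ (v p) - τ (v 0 + v 1) / τ (v p) := by
    rw [hA0v, hA1v, map_add, map_add, add_div, add_div]
    ring
  have hXd0 : Xd 0 = x 0 := by rw [hXdef]; simp only; rw [ip0]
  have hXd1 : Xd 1 = x 1 := by rw [hXdef]; simp only; rw [ip1]
  have zA0 : A 0 ≠ 0 := by rw [hA0v]; exact ndiff hpσ hpτ hA0
  have zA1 : A 1 ≠ 0 := by rw [hA1v]; exact ndiff hpσ hpτ hA1
  have zAs : A 0 + A 1 ≠ 0 := by rw [hsum]; exact ndiff hpσ hpτ hSp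
  have key := zeta_L1 A Xd 0 1 h01 zA0 zA1 zAs
  have m1 : (fun q : Fin (r + 1) =>
        σ (Function.update v 1 (v 0 + v 1) (p.succAbove q)) / σ (v p)
          - τ (Function.update v 1 (v 0 + v 1) (p.succAbove q)) / τ (v p))
      = Function.update A 1 (A 0 + A 1) := by
    funext q
    by_cases hq : q = 1
    · subst hq
      rw [ip1, Function.update_self, Function.update_self, hsum]
    · rw [Function.update_of_ne (iq1 q hq), Function.update_of_ne hq, hAdef]
  have m2 : (fun q : Fin (r + 1) =>
        Function.update x 0 (x 0 - x 1 + 1) (p.succAbove q))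
      = Function.update Xd 0 (Xd 0 - Xd 1 + 1) := by
    funext q
    by_cases hq : q = 0
    · subst hq
      rw [ip0, Function.update_self, Function.update_self, hXd0, hXd1]
    · rw [Function.update_of_ne (iq0 q hq), Function.update_of_ne hq, hXdef]
  have m3 : (fun q : Fin (r + 1) =>
        σ (Function.update v 0 (v 0 + v 1) (p.succAbove q)) / σ (v p)
          - τ (Function.update v 0 (v 0 + v 1) (p.succAbove q)) / τ (v p))
      = Function.update A 0 (A 0 + A 1) := by
    funext q
    by_cases hq : q = 0
    · subst hq
      rw [ip0, Function.update_self, Function.update_self, hsum]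
    · rw [Function.update_of_ne (iq0 q hq), Function.update_of_ne hq, hAdef]
  have m4 : (fun q : Fin (r + 1) =>
        Function.update x 1 (x 1 - x 0) (p.succAbove q))
      = Function.update Xd 1 (Xd 1 - Xd 0) := by
    funext q
    by_cases hq : q = 1
    · subst hq
      rw [ip1, Function.update_self, Function.update_self, hXd0, hXd1]
    · rw [Function.update_of_ne (iq1 q hq), Function.update_of_ne hq, hXdef]
  rw [m1, m2, m3, m4, key]
  ring

lemma succ_succ_ne_zero (t : Fin r) : (t.succ.succ : Fin (r + 2)) ≠ 0 :=
  Fin.succ_ne_zero _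

lemma succ_succ_ne_one (t : Fin r) : (t.succ.succ : Fin (r + 2)) ≠ 1 := fun h =>
  Fin.succ_ne_zero t ((Fin.succ_injective _) (h.trans Fin.succ_zero_eq_one.symm))

lemma Jsub_a (hv : ∀ p, v p ≠ 0) (hv12 : v 0 + v 1 ≠ 0)
    (hA : ∀ p q : Fin (r + 2), p ≠ q → σ (v q) * τ (v p) ≠ σ (v p) * τ (v q))
    (hS : ∀ p : Fin (r + 2), p ≠ 1 → σ (v 0 + v 1) * τ (v p) ≠ σ (v p) * τ (v 0 + v 1))
    (hS0 : σ (v 0) * τ (v 0 + v 1) ≠ σ (v 0 + v 1) * τ (v 0)) :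
    Jterm σ τ v x
      = Jterm σ τ (Function.update v 1 (v 0 + v 1)) (Function.update x 0 (x 0 - x 1 + 1))
        + Jterm σ τ (Function.update v 0 (v 0 + v 1)) (Function.update x 1 (x 1 - x 0)) := by
  rw [Jterm_expand, Jterm_expand, Jterm_expand]
  have e0 := Tsub_e0 σ τ v x (x 0 - x 1 + 1) (map_ne' σ (hv 0)) (map_ne' τ (hv 0))
  have e1 := Tsub_e1 σ τ v x (x 1 - x 0) (map_ne' σ (hv 1)) (map_ne' τ (hv 1))
  have e2 := Tsub_e2 σ τ v x (map_ne' σ hv12) (map_ne' τ hv12) hS0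
  have hsum : ∑ t : Fin r, Tterm σ τ v x t.succ.succ
      = ∑ t : Fin r,
          (Tterm σ τ (Function.update v 1 (v 0 + v 1))
              (Function.update x 0 (x 0 - x 1 + 1)) t.succ.succ
            + Tterm σ τ (Function.update v 0 (v 0 + v 1))
              (Function.update x 1 (x 1 - x 0)) t.succ.succ) :=
    Finset.sum_congr rfl fun t _ =>
      Tsub_e3 σ τ v x t (map_ne' σ (hv _)) (map_ne' τ (hv _))
        (hA _ 0 (succ_succ_ne_zero t)) (hA _ 1 (succ_succ_ne_one t))
        (hS _ (succ_succ_ne_one t))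
  rw [hsum, Finset.sum_add_distrib]
  linarith [e0, e1, e2]

lemma vnat_ne_zero' {j : Fin (r + 1)} (hj : j ≠ 0) :
    (Fin.cons (v 0 + v 1) (fun i : Fin r => v i.succ.succ) : Fin (r + 1) → F) j
      = v j.succ := by
  cases j using Fin.cases with
  | zero => exact absurd rfl hj
  | succ i => rw [Fin.cons_succ]

lemma Tsub_b2 (y : Fin (r + 2) → ℝ)
    (hs'σ : σ (v 0 + v 1) ≠ 0) (hs'τ : τ (v 0 + v 1) ≠ 0)
    (hS0 : σ (v 0) * τ (v 0 + v 1) ≠ σ (v 0 + v 1) * τ (v 0)) :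
    Tterm σ τ (Function.update v 1 (v 0 + v 1)) (Function.update y 0 1) 1
      + Tterm σ τ (Function.update v 0 (v 0 + v 1)) (Function.update y 1 1) 0
      + Tterm σ τ (Fin.cons (v 0 + v 1) (fun i : Fin r => v i.succ.succ))
          (fun j => y j.succ) 0 = 0 := by
  unfold Tterm
  rw [Function.update_self, Function.update_self, Fin.cons_zero]
  set A1 : Fin (r + 1) → ℝ := fun q =>
    σ (Function.update v 1 (v 0 + v 1) ((1 : Fin (r + 2)).succAbove q)) / σ (v 0 + v 1)
      - τ (Function.update v 1 (v 0 + v 1) ((1 : Fin (r + 2)).succAbove q)) / τ (v 0 + v 1)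
    with hA1def
  set X1 : Fin (r + 1) → ℝ := fun q =>
    Function.update y 0 1 ((1 : Fin (r + 2)).succAbove q) with hX1def
  have hA10 : A1 0 = σ (v 0) / σ (v 0 + v 1) - τ (v 0) / τ (v 0 + v 1) := by
    rw [hA1def]
    simp only
    rw [succAbove_one_zero, Function.update_of_ne (fin_one_ne_zero').symm]
  have hX10 : X1 0 = 1 := by
    rw [hX1def]
    simp only
    rw [succAbove_one_zero, Function.update_self]
  have key : ∀ (ρ : F →+* ℝ), ρ (v 0 + v 1) ≠ 0 →
      ρ (v 1) / ρ (v 0 + v 1) = 1 - ρ (v 0) / ρ (v 0 + v 1) := by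
    intro ρ hρ
    rw [eq_sub_iff_add_eq, ← add_div, add_comm, ← map_add, div_self hρ]
  have c1 : (fun q : Fin (r + 1) =>
        σ (Function.update v 0 (v 0 + v 1) ((0 : Fin (r + 2)).succAbove q)) / σ (v 0 + v 1)
          - τ (Function.update v 0 (v 0 + v 1) ((0 : Fin (r + 2)).succAbove q)) / τ (v 0 + v 1))
      = Function.update A1 0 (-(A1 0)) := by
    funext q
    rw [Fin.succAbove_zero]
    by_cases hq : q = 0
    · subst hq
      rw [Function.update_self, Fin.succ_zero_eq_one,
        Function.update_of_ne (fin_one_ne_zero'), hA10, key σ hs'σ, key τ hs'τ]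
      ring
    · rw [Function.update_of_ne (Fin.succ_ne_zero q), Function.update_of_ne hq, hA1def]
      simp only
      rw [succAbove_one_ne_zero hq, Function.update_of_ne (succ_ne_one' hq)]
  have c2 : (fun q : Fin (r + 1) =>
        Function.update y 1 1 ((0 : Fin (r + 2)).succAbove q)) = X1 := by
    funext q
    rw [Fin.succAbove_zero]
    by_cases hq : q = 0
    · subst hq
      rw [Fin.succ_zero_eq_one, Function.update_self, hX10]
    · rw [Function.update_of_ne (succ_ne_one' hq), hX1def]
      simp only
      rw [succAbove_one_ne_zero hq, Function.update_of_ne (Fin.succ_ne_zero q)]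
  have c3 : (fun q : Fin r =>
        σ ((Fin.cons (v 0 + v 1) (fun i : Fin r => v i.succ.succ) : Fin (r + 1) → F)
            ((0 : Fin (r + 1)).succAbove q)) / σ (v 0 + v 1)
          - τ ((Fin.cons (v 0 + v 1) (fun i : Fin r => v i.succ.succ) : Fin (r + 1) → F)
            ((0 : Fin (r + 1)).succAbove q)) / τ (v 0 + v 1))
      = A1 ∘ (0 : Fin (r + 1)).succAbove := by
    funext q
    rw [Function.comp_apply, Fin.succAbove_zero, Fin.cons_succ, hA1def]
    simp only
    rw [succAbove_one_ne_zero (Fin.succ_ne_zero q),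
      Function.update_of_ne (succ_ne_one' (Fin.succ_ne_zero q))]
  have c4 : (fun q : Fin r => (fun j : Fin (r + 1) => y j.succ)
        ((0 : Fin (r + 1)).succAbove q)) = X1 ∘ (0 : Fin (r + 1)).succAbove := by
    funext q
    rw [Function.comp_apply, Fin.succAbove_zero, hX1def]
    simp only
    rw [succAbove_one_ne_zero (Fin.succ_ne_zero q),
      Function.update_of_ne (Fin.succ_ne_zero q.succ)]
  have h0A : A1 0 ≠ 0 := by
    rw [hA10]
    exact ndiff hs'σ hs'τ hS0
  rw [c1, c2, c3, c4]
  have L3 := zeta_L3 A1 X1 0 h0A hX10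
  linear_combination Real.log |σ (v 0 + v 1) / τ (v 0 + v 1)| * L3

lemma Tsub_b3 (t : Fin r) (y : Fin (r + 2) → ℝ) (hy : y 0 = y 1)
    (hpσ : σ (v t.succ.succ) ≠ 0) (hpτ : τ (v t.succ.succ) ≠ 0)
    (hA0 : σ (v 0) * τ (v t.succ.succ) ≠ σ (v t.succ.succ) * τ (v 0))
    (hA1 : σ (v 1) * τ (v t.succ.succ) ≠ σ (v t.succ.succ) * τ (v 1))
    (hSp : σ (v 0 + v 1) * τ (v t.succ.succ) ≠ σ (v t.succ.succ) * τ (v 0 + v 1)) :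
    Tterm σ τ v y t.succ.succ
      = Tterm σ τ (Function.update v 1 (v 0 + v 1)) (Function.update y 0 1) t.succ.succ
        + Tterm σ τ (Function.update v 0 (v 0 + v 1)) (Function.update y 1 1) t.succ.succ
        + Tterm σ τ (Fin.cons (v 0 + v 1) (fun i : Fin r => v i.succ.succ))
            (fun j => y j.succ) t.succ := by
  have hr : 0 < r := t.pos
  set p : Fin (r + 2) := t.succ.succ with hpdef
  have hpval : (p : ℕ) = (t : ℕ) + 2 := by
    rw [hpdef, Fin.val_succ, Fin.val_succ]
  have hp0 : p ≠ 0 := Fin.ne_of_val_ne (by rw [hpval, Fin.val_zero]; omega)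
  have hp1 : p ≠ (1 : Fin (r + 2)) := Fin.ne_of_val_ne (by rw [hpval, Fin.val_one]; omega)
  have ip0 : p.succAbove 0 = 0 := by
    apply Fin.ext
    rw [succAbove_coe, Fin.val_zero, Fin.val_zero, hpval, if_pos (by omega)]
  have h1v : ((1 : Fin (r + 1)) : ℕ) = 1 := by
    rw [Fin.val_one']
    exact Nat.mod_eq_of_lt (by omega)
  have ip1 : p.succAbove (1 : Fin (r + 1)) = 1 := by
    apply Fin.ext
    rw [succAbove_coe, h1v, Fin.val_one, hpval, if_pos (by omega)]
  have h01 : (0 : Fin (r + 1)) ≠ 1 := by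
    apply Fin.ne_of_val_ne
    rw [Fin.val_zero, h1v]
    omega
  have iq0 : ∀ q : Fin (r + 1), q ≠ 0 → p.succAbove q ≠ 0 := by
    intro q hq h
    exact hq (Fin.succAbove_right_injective (h.trans ip0.symm))
  have iq1 : ∀ q : Fin (r + 1), q ≠ 1 → p.succAbove q ≠ 1 := by
    intro q hq h
    exact hq (Fin.succAbove_right_injective (h.trans ip1.symm))
  -- Fin (r+1)-level index facts
  have k0 : ∀ q : Fin r, (q : ℕ) = 0 → (1 : Fin (r + 1)).succAbove q = 0 := by
    intro q hq
    apply Fin.ext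
    rw [succAbove_coe, hq, Fin.val_zero, h1v, if_pos (by omega)]
  have kq : ∀ q : Fin r, (q : ℕ) ≠ 0 → (1 : Fin (r + 1)).succAbove q = q.succ := by
    intro q hq
    apply Fin.ext
    rw [succAbove_coe, h1v, Fin.val_succ, if_neg (by omega)]
  have t0 : ∀ q : Fin r, (q : ℕ) = 0 → (t.succ : Fin (r + 1)).succAbove q = 0 := by
    intro q hq
    apply Fin.ext
    rw [succAbove_coe, hq, Fin.val_zero, Fin.val_succ, if_pos (by omega)]
  have tq : ∀ q : Fin r, (q : ℕ) ≠ 0 → (t.succ : Fin (r + 1)).succAbove q ≠ 0 := by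
    intro q hq h
    have := congrArg (Fin.val) h
    rw [succAbove_coe, Fin.val_zero, Fin.val_succ] at this
    by_cases hlt : (q : ℕ) < (t : ℕ) + 1
    · rw [if_pos hlt] at this
      omega
    · rw [if_neg hlt] at this
      omega
  have idx : ∀ q : Fin r, ((t.succ : Fin (r + 1)).succAbove q).succ = p.succAbove q.succ := by
    intro q
    apply Fin.ext
    rw [Fin.val_succ, succAbove_coe, succAbove_coe, Fin.val_succ, Fin.val_succ, hpval]
    by_cases h : (q : ℕ) < (t : ℕ) + 1
    · rw [if_pos h, if_pos (by omega)]
    · rw [if_neg h, if_neg (by omega)]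
  have hnt : (Fin.cons (v 0 + v 1) (fun i : Fin r => v i.succ.succ) : Fin (r + 1) → F) t.succ
      = v p := by
    rw [Fin.cons_succ]
  unfold Tterm
  rw [Function.update_of_ne hp1, Function.update_of_ne hp0, hnt]
  set A : Fin (r + 1) → ℝ := fun q =>
    σ (v (p.succAbove q)) / σ (v p) - τ (v (p.succAbove q)) / τ (v p) with hAdef
  set Xd : Fin (r + 1) → ℝ := fun q => y (p.succAbove q) with hXdef
  have hA0v : A 0 = σ (v 0) / σ (v p) - τ (v 0) / τ (v p) := by
    rw [hAdef]; simp only; rw [ip0]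
  have hA1v : A 1 = σ (v 1) / σ (v p) - τ (v 1) / τ (v p) := by
    rw [hAdef]; simp only; rw [ip1]
  have hsum : A 0 + A 1 = σ (v 0 + v 1) / σ (v p) - τ (v 0 + v 1) / τ (v p) := by
    rw [hA0v, hA1v, map_add, map_add, add_div, add_div]
    ring
  have hXd01 : Xd 0 = Xd 1 := by
    rw [hXdef]; simp only; rw [ip0, ip1]; exact hy
  have zA0 : A 0 ≠ 0 := by rw [hA0v]; exact ndiff hpσ hpτ hA0
  have zA1 : A 1 ≠ 0 := by rw [hA1v]; exact ndiff hpσ hpτ hA1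
  have zAs : A 0 + A 1 ≠ 0 := by rw [hsum]; exact ndiff hpσ hpτ hSp
  have key := zeta_L4 A Xd 0 1 h01 zA0 zA1 zAs hXd01
  have m1 : (fun q : Fin (r + 1) =>
        σ (Function.update v 1 (v 0 + v 1) (p.succAbove q)) / σ (v p)
          - τ (Function.update v 1 (v 0 + v 1) (p.succAbove q)) / τ (v p))
      = Function.update A 1 (A 0 + A 1) := by
    funext q
    by_cases hq : q = 1
    · subst hq
      rw [ip1, Function.update_self, Function.update_self, hsum]
    · rw [Function.update_of_ne (iq1 q hq), Function.update_of_ne hq, hAdef]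
  have m2 : (fun q : Fin (r + 1) => Function.update y 0 1 (p.succAbove q))
      = Function.update Xd 0 1 := by
    funext q
    by_cases hq : q = 0
    · subst hq
      rw [ip0, Function.update_self, Function.update_self]
    · rw [Function.update_of_ne (iq0 q hq), Function.update_of_ne hq, hXdef]
  have m3 : (fun q : Fin (r + 1) =>
        σ (Function.update v 0 (v 0 + v 1) (p.succAbove q)) / σ (v p)
          - τ (Function.update v 0 (v 0 + v 1) (p.succAbove q)) / τ (v p))
      = Function.update A 0 (A 0 + A 1) := by
    funext q
    by_cases hq : q = 0
    · subst hq
      rw [ip0, Function.update_self, Function.update_self, hsum]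
    · rw [Function.update_of_ne (iq0 q hq), Function.update_of_ne hq, hAdef]
  have m4 : (fun q : Fin (r + 1) => Function.update y 1 1 (p.succAbove q))
      = Function.update Xd 1 1 := by
    funext q
    by_cases hq : q = 1
    · subst hq
      rw [ip1, Function.update_self, Function.update_self]
    · rw [Function.update_of_ne (iq1 q hq), Function.update_of_ne hq, hXdef]
  have m5 : (fun q : Fin r =>
        σ ((Fin.cons (v 0 + v 1) (fun i : Fin r => v i.succ.succ) : Fin (r + 1) → F)
            ((t.succ : Fin (r + 1)).succAbove q)) / σ (v p)
          - τ ((Fin.cons (v 0 + v 1) (fun i : Fin r => v i.succ.succ) : Fin (r + 1) → F)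
            ((t.succ : Fin (r + 1)).succAbove q)) / τ (v p))
      = (Function.update A 0 (A 0 + A 1)) ∘ (1 : Fin (r + 1)).succAbove := by
    funext q
    rw [Function.comp_apply]
    by_cases hq : (q : ℕ) = 0
    · rw [t0 q hq, k0 q hq, Fin.cons_zero, Function.update_self, hsum]
    · rw [vnat_ne_zero' v (tq q hq), kq q hq,
        Function.update_of_ne (Fin.succ_ne_zero q), idx q, hAdef]
  have m6 : (fun q : Fin r =>
        (fun j : Fin (r + 1) => y j.succ) ((t.succ : Fin (r + 1)).succAbove q))
      = Xd ∘ (1 : Fin (r + 1)).succAbove := by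
    funext q
    rw [Function.comp_apply]
    by_cases hq : (q : ℕ) = 0
    · rw [t0 q hq, k0 q hq, hXdef]
      simp only
      rw [ip0, Fin.succ_zero_eq_one]
      exact hy.symm
    · rw [kq q hq, hXdef]
      simp only
      rw [← idx q]
  rw [m1, m2, m3, m4, m5, m6, key]
  ring

lemma Jterm_expand1 {w : Fin (r + 1) → F} {y : Fin (r + 1) → ℝ} :
    Jterm σ τ w y = Tterm σ τ w y 0 + ∑ t : Fin r, Tterm σ τ w y t.succ := by
  rw [Jterm, Fin.sum_univ_succ]

lemma Jsub_b (x : ℝ) (x' : Fin r → ℝ) (hv : ∀ p, v p ≠ 0) (hv12 : v 0 + v 1 ≠ 0)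
    (hA : ∀ p q : Fin (r + 2), p ≠ q → σ (v q) * τ (v p) ≠ σ (v p) * τ (v q))
    (hS : ∀ p : Fin (r + 2), p ≠ 1 → σ (v 0 + v 1) * τ (v p) ≠ σ (v p) * τ (v 0 + v 1))
    (hS0 : σ (v 0) * τ (v 0 + v 1) ≠ σ (v 0 + v 1) * τ (v 0)) :
    Jterm σ τ v (Fin.cons x (Fin.cons x x'))
      = Jterm σ τ (Function.update v 1 (v 0 + v 1)) (Fin.cons 1 (Fin.cons x x'))
        + Jterm σ τ (Function.update v 0 (v 0 + v 1)) (Fin.cons x (Fin.cons 1 x'))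
        + Jterm σ τ (Fin.cons (v 0 + v 1) (fun i : Fin r => v i.succ.succ))
            (Fin.cons x x') := by
  set yv : Fin (r + 2) → ℝ := Fin.cons x (Fin.cons x x') with hyv
  have hyv0 : yv 0 = x := by rw [hyv, Fin.cons_zero]
  have hyv1 : yv 1 = x := by
    rw [hyv, ← Fin.succ_zero_eq_one, Fin.cons_succ, Fin.cons_zero]
  have hsharp : Fin.cons (1 : ℝ) (Fin.cons x x') = Function.update yv 0 1 := by
    funext j
    cases j using Fin.cases with
    | zero => rw [Fin.cons_zero, Function.update_self]
    | succ i =>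
      rw [Fin.cons_succ, Function.update_of_ne (Fin.succ_ne_zero i), hyv, Fin.cons_succ]
  have hflat : Fin.cons x (Fin.cons (1 : ℝ) x') = Function.update yv 1 1 := by
    funext j
    cases j using Fin.cases with
    | zero =>
      rw [Fin.cons_zero, Function.update_of_ne (fin_one_ne_zero').symm, hyv0]
    | succ i =>
      cases i using Fin.cases with
      | zero =>
        rw [Fin.succ_zero_eq_one, Function.update_self, ← Fin.succ_zero_eq_one,
          Fin.cons_succ, Fin.cons_zero]
      | succ w =>
        rw [Fin.cons_succ, Fin.cons_succ,
          Function.update_of_ne (succ_succ_ne_one w), hyv, Fin.cons_succ, Fin.cons_succ]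
  have hnat : (Fin.cons x x' : Fin (r + 1) → ℝ) = fun j : Fin (r + 1) => yv j.succ := by
    funext j
    cases j using Fin.cases with
    | zero => rw [Fin.cons_zero, Fin.succ_zero_eq_one, hyv1]
    | succ i => rw [Fin.cons_succ, hyv, Fin.cons_succ, Fin.cons_succ]
  rw [hsharp, hflat, hnat, Jterm_expand, Jterm_expand, Jterm_expand, Jterm_expand1]
  have e0 := Tsub_e0 σ τ v yv 1 (map_ne' σ (hv 0)) (map_ne' τ (hv 0))
  have e1 := Tsub_e1 σ τ v yv 1 (map_ne' σ (hv 1)) (map_ne' τ (hv 1))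
  have e2 := Tsub_b2 σ τ v yv (map_ne' σ hv12) (map_ne' τ hv12) hS0
  have hsum : ∑ t : Fin r, Tterm σ τ v yv t.succ.succ
      = ∑ t : Fin r,
          (Tterm σ τ (Function.update v 1 (v 0 + v 1)) (Function.update yv 0 1) t.succ.succ
            + Tterm σ τ (Function.update v 0 (v 0 + v 1)) (Function.update yv 1 1) t.succ.succ
            + Tterm σ τ (Fin.cons (v 0 + v 1) (fun i : Fin r => v i.succ.succ))
                (fun j => yv j.succ) t.succ) :=
    Finset.sum_congr rfl fun t _ =>
      Tsub_b3 σ τ v t yv (hyv0.trans hyv1.symm) (map_ne' σ (hv _)) (map_ne' τ (hv _))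
        (hA _ 0 (succ_succ_ne_zero t)) (hA _ 1 (succ_succ_ne_one t))
        (hS _ (succ_succ_ne_one t))
  rw [hsum, Finset.sum_add_distrib, Finset.sum_add_distrib]
  linarith [e0, e1, e2]

end Jsub

lemma Vterm_eq_J {F : Type*} [Field F] {n s : ℕ} (emb : Fin (n + 1) → (F →+* ℝ))
    (v : Fin (s + 1) → F) (x : Fin (s + 1) → ℝ) :
    Vterm emb v x
      = -(1 / (n + 1 : ℝ)) *
          ∑ k ∈ Finset.univ.filter (fun k : Fin (n + 1) => k ≠ 0),
            Jterm (emb 0) (emb k) v x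
        + (1 / (n + 1 : ℝ) ^ 2) *
          ∑ i : Fin (n + 1), ∑ k ∈ Finset.univ.filter (fun k : Fin (n + 1) => i < k),
            Jterm (emb i) (emb k) v x := rfl

/-- invariance of the `V`-term under the elementary cone subdivision
`v ↦ v♯ = (v₁, v₁+v₂, v₃, …)`, `v♭ = (v₁+v₂, v₂, v₃, …)`, `v♮ = (v₁+v₂, v₃, …)`. -/
theorem Vterm_cone_subdivision {F : Type*} [Field F] [NumberField F] (n : ℕ)
    (hdeg : Module.finrank ℚ F = n + 2)
    (emb : Fin (n + 2) → (F →+* ℝ)) (hemb : Function.Bijective emb)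
    (r : ℕ) (v : Fin (r + 2) → F) (hv : ∀ p, v p ≠ 0) (hv12 : v 0 + v 1 ≠ 0)
    (hnd : Nondeg emb v)
    (hndS : Nondeg emb (Function.update v 1 (v 0 + v 1)))
    (hndB : Nondeg emb (Function.update v 0 (v 0 + v 1)))
    (hndN : Nondeg emb (Fin.cons (v 0 + v 1) (fun i : Fin r => v i.succ.succ))) :
    (∀ x : Fin (r + 2) → ℝ,
      Vterm emb v x
        = Vterm emb (Function.update v 1 (v 0 + v 1)) (Function.update x 0 (x 0 - x 1 + 1))
          + Vterm emb (Function.update v 0 (v 0 + v 1)) (Function.update x 1 (x 1 - x 0)))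
    ∧ (∀ (x : ℝ) (x' : Fin r → ℝ),
      Vterm emb v (Fin.cons x (Fin.cons x x'))
        = Vterm emb (Function.update v 1 (v 0 + v 1)) (Fin.cons 1 (Fin.cons x x'))
          + Vterm emb (Function.update v 0 (v 0 + v 1)) (Fin.cons x (Fin.cons 1 x'))
          + Vterm emb (Fin.cons (v 0 + v 1) (fun i : Fin r => v i.succ.succ))
              (Fin.cons x x')) := by
  constructor
  · intro x
    rw [Vterm_eq_J, Vterm_eq_J, Vterm_eq_J]
    have key : ∀ i k : Fin (n + 2), i ≠ k →
        Jterm (emb i) (emb k) v x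
          = Jterm (emb i) (emb k) (Function.update v 1 (v 0 + v 1))
              (Function.update x 0 (x 0 - x 1 + 1))
            + Jterm (emb i) (emb k) (Function.update v 0 (v 0 + v 1))
              (Function.update x 1 (x 1 - x 0)) := by
      intro i k hik
      apply Jsub_a _ _ _ _ hv hv12
      · intro p q hpq
        exact hnd i k hik p q hpq
      · intro p hp
        have h := hndS i k hik p 1 hp
        rwa [Function.update_self, Function.update_of_ne hp] at h
      · have h := hndS i k hik 1 0 (fin_one_ne_zero')
        rwa [Function.update_of_ne (fin_one_ne_zero').symm, Function.update_self] at h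
    have h1 : ∑ k ∈ Finset.univ.filter (fun k : Fin (n + 2) => k ≠ 0),
          Jterm (emb 0) (emb k) v x
        = ∑ k ∈ Finset.univ.filter (fun k : Fin (n + 2) => k ≠ 0),
            (Jterm (emb 0) (emb k) (Function.update v 1 (v 0 + v 1))
                (Function.update x 0 (x 0 - x 1 + 1))
              + Jterm (emb 0) (emb k) (Function.update v 0 (v 0 + v 1))
                (Function.update x 1 (x 1 - x 0))) :=
      Finset.sum_congr rfl fun k hk =>
        key 0 k (fun h => (Finset.mem_filter.mp hk).2 h.symm)
    have h2 : ∀ i : Fin (n + 2),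
        ∑ k ∈ Finset.univ.filter (fun k : Fin (n + 2) => i < k),
          Jterm (emb i) (emb k) v x
        = ∑ k ∈ Finset.univ.filter (fun k : Fin (n + 2) => i < k),
            (Jterm (emb i) (emb k) (Function.update v 1 (v 0 + v 1))
                (Function.update x 0 (x 0 - x 1 + 1))
              + Jterm (emb i) (emb k) (Function.update v 0 (v 0 + v 1))
                (Function.update x 1 (x 1 - x 0))) := fun i =>
      Finset.sum_congr rfl fun k hk =>
        key i k (Finset.mem_filter.mp hk).2.ne
    rw [h1, Finset.sum_congr rfl fun i _ => h2 i]
    simp only [Finset.sum_add_distrib]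
    ring
  · intro x x'
    rw [Vterm_eq_J, Vterm_eq_J, Vterm_eq_J, Vterm_eq_J]
    have key : ∀ i k : Fin (n + 2), i ≠ k →
        Jterm (emb i) (emb k) v (Fin.cons x (Fin.cons x x'))
          = Jterm (emb i) (emb k) (Function.update v 1 (v 0 + v 1))
              (Fin.cons 1 (Fin.cons x x'))
            + Jterm (emb i) (emb k) (Function.update v 0 (v 0 + v 1))
              (Fin.cons x (Fin.cons 1 x'))
            + Jterm (emb i) (emb k)
              (Fin.cons (v 0 + v 1) (fun i : Fin r => v i.succ.succ)) (Fin.cons x x') := by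
      intro i k hik
      apply Jsub_b _ _ _ _ _ hv hv12
      · intro p q hpq
        exact hnd i k hik p q hpq
      · intro p hp
        have h := hndS i k hik p 1 hp
        rwa [Function.update_self, Function.update_of_ne hp] at h
      · have h := hndS i k hik 1 0 (fin_one_ne_zero')
        rwa [Function.update_of_ne (fin_one_ne_zero').symm, Function.update_self] at h
    have h1 : ∑ k ∈ Finset.univ.filter (fun k : Fin (n + 2) => k ≠ 0),
          Jterm (emb 0) (emb k) v (Fin.cons x (Fin.cons x x'))
        = ∑ k ∈ Finset.univ.filter (fun k : Fin (n + 2) => k ≠ 0),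
            (Jterm (emb 0) (emb k) (Function.update v 1 (v 0 + v 1))
                (Fin.cons 1 (Fin.cons x x'))
              + Jterm (emb 0) (emb k) (Function.update v 0 (v 0 + v 1))
                (Fin.cons x (Fin.cons 1 x'))
              + Jterm (emb 0) (emb k)
                (Fin.cons (v 0 + v 1) (fun i : Fin r => v i.succ.succ)) (Fin.cons x x')) :=
      Finset.sum_congr rfl fun k hk =>
        key 0 k (fun h => (Finset.mem_filter.mp hk).2 h.symm)
    have h2 : ∀ i : Fin (n + 2),
        ∑ k ∈ Finset.univ.filter (fun k : Fin (n + 2) => i < k),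
          Jterm (emb i) (emb k) v (Fin.cons x (Fin.cons x x'))
        = ∑ k ∈ Finset.univ.filter (fun k : Fin (n + 2) => i < k),
            (Jterm (emb i) (emb k) (Function.update v 1 (v 0 + v 1))
                (Fin.cons 1 (Fin.cons x x'))
              + Jterm (emb i) (emb k) (Function.update v 0 (v 0 + v 1))
                (Fin.cons x (Fin.cons 1 x'))
              + Jterm (emb i) (emb k)
                (Fin.cons (v 0 + v 1) (fun i : Fin r => v i.succ.succ)) (Fin.cons x x')) :=
      fun i => Finset.sum_congr rfl fun k hk =>
        key i k (Finset.mem_filter.mp hk).2.ne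
    rw [h1, Finset.sum_congr rfl fun i _ => h2 i]
    simp only [Finset.sum_add_distrib]
    ring
end
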